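/- arXiv:1403.5835 — 12 statements merged into one kernel-verified Lean document; each statement's English description precedes it below -/
import Mathlib

section
/- Let n < N be positive integers, let A be an n×N complex matrix and A⊥ an (N−n)×N complex matrix such that A·(A⊥)ᵀ = 0 and the N×N matrix obtained by stacking A on top of A⊥ is invertible. Then for any N×N complex matrix B, the matrix A·B·(A⊥)ᵀ has rank at most 1 if and only if there exist an n×n complex matrix D, a vector f ∈ ℂⁿ and a vector g ∈ ℂᴺ such that A·B − Dᵀ·A = f·gᵀ. -/
open Matrix BigOperators

lemma rank_vecMulVec_le_one {m p : Type*} [Fintype m] [Fintype p]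
    (f : m → ℂ) (g : p → ℂ) : (Matrix.vecMulVec f g).rank ≤ 1 := by
  rw [Matrix.vecMulVec_eq Unit]
  refine (Matrix.rank_mul_le_left _ _).trans ?_
  simpa using Matrix.rank_le_card_width (Matrix.replicateCol Unit f)

lemma exists_vecMulVec_of_rank_le_one {m p : Type*} [Fintype m] [Fintype p] [DecidableEq p]
    (M : Matrix m p ℂ) (h : M.rank ≤ 1) :
    ∃ (f : m → ℂ) (g : p → ℂ), M = Matrix.vecMulVec f g := by
  rw [Matrix.rank] at h
  obtain ⟨v, hv⟩ := finrank_le_one_iff.mp h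
  have hcol : ∀ j : p, ∃ c : ℂ, c • (v : m → ℂ) = Mᵀ j := by
    intro j
    obtain ⟨c, hc⟩ := hv ⟨M *ᵥ Pi.single j 1, ⟨Pi.single j 1, M.mulVecLin_apply _⟩⟩
    refine ⟨c, ?_⟩
    have := congrArg Subtype.val hc
    simpa [Matrix.mulVec_single_one, Matrix.col_def] using this
  choose g hg using hcol
  refine ⟨(v : m → ℂ), g, ?_⟩
  ext i j
  have := congrFun (hg j) i
  simp only [Pi.smul_apply, smul_eq_mul, Matrix.transpose_apply] at this
  rw [Matrix.vecMulVec_apply, ← this, mul_comm]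

/-- For `A` an `n × N` matrix (`N = n + k`), `A⊥` a `k × N` matrix with
`A · (A⊥)ᵀ = 0` and the stacked matrix invertible, and any `N × N` matrix `B`,
`rank (A·B·(A⊥)ᵀ) ≤ 1` iff there exist `D`, `f`, `g` with `A·B − Dᵀ·A = f·gᵀ`. -/
theorem stmt0 (n k : ℕ) (hn : 0 < n) (hk : 0 < k)
    (A : Matrix (Fin n) (Fin (n + k)) ℂ)
    (Aperp : Matrix (Fin k) (Fin (n + k)) ℂ)
    (horth : A * Aperpᵀ = 0)
    (hinv : IsUnit ((Matrix.fromRows A Aperp).submatrix finSumFinEquiv.symm id))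
    (B : Matrix (Fin (n + k)) (Fin (n + k)) ℂ) :
    (A * B * Aperpᵀ).rank ≤ 1 ↔
      ∃ (D : Matrix (Fin n) (Fin n) ℂ) (f : Fin n → ℂ) (g : Fin (n + k) → ℂ),
        A * B - Dᵀ * A = Matrix.vecMulVec f g := by
  set e : Fin n ⊕ Fin k ≃ Fin (n + k) := finSumFinEquiv with he
  set S : Matrix (Fin (n + k)) (Fin (n + k)) ℂ :=
    (Matrix.fromRows A Aperp).submatrix e.symm id with hS
  constructor
  · intro hrank
    obtain ⟨u, hu⟩ := hinv
    set T : Matrix (Fin (n + k)) (Fin (n + k)) ℂ := u⁻¹.val with hT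
    have hST : S * T = 1 := by rw [← hu, hT, ← Units.val_mul, mul_inv_cancel]; rfl
    have hTS : T * S = 1 := by rw [← hu, hT, ← Units.val_mul, inv_mul_cancel]; rfl
    set P : Matrix (Fin (n + k)) (Fin n) ℂ :=
      Matrix.of (fun i a => T i (e (Sum.inl a))) with hP
    set Q : Matrix (Fin (n + k)) (Fin k) ℂ :=
      Matrix.of (fun i b => T i (e (Sum.inr b))) with hQ
    -- key1 : P * A + Q * Aperp = 1
    have key1 : P * A + Q * Aperp = (1 : Matrix (Fin (n + k)) (Fin (n + k)) ℂ) := by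
      rw [← hTS]
      ext i j
      rw [Matrix.add_apply, Matrix.mul_apply, Matrix.mul_apply, Matrix.mul_apply,
        ← Equiv.sum_comp e (fun l => T i l * S l j), Fintype.sum_sum_type]
      congr 1 <;> refine Finset.sum_congr rfl (fun x _ => ?_) <;>
        simp [hS, hP, hQ, Matrix.fromRows_apply_inl, Matrix.fromRows_apply_inr]
    -- key2 : Aperp * Q = 1
    have key2 : Aperp * Q = (1 : Matrix (Fin k) (Fin k) ℂ) := by
      ext b b'
      have h1 : ∀ l, S (e (Sum.inr b)) l = Aperp b l := by
        intro l; simp [hS, Matrix.fromRows_apply_inr]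
      calc (Aperp * Q) b b' = ∑ l, S (e (Sum.inr b)) l * T l (e (Sum.inr b')) := by
            rw [Matrix.mul_apply]; exact Finset.sum_congr rfl (fun l _ => by rw [h1]; rfl)
        _ = (S * T) (e (Sum.inr b)) (e (Sum.inr b')) := (Matrix.mul_apply).symm
        _ = (1 : Matrix (Fin (n + k)) (Fin (n + k)) ℂ) (e (Sum.inr b)) (e (Sum.inr b')) := by
            rw [hST]
        _ = (1 : Matrix (Fin k) (Fin k) ℂ) b b' := by
            simp [Matrix.one_apply, e.injective.eq_iff]
    -- key3 : Aperpᵀ = Q * (Aperp * Aperpᵀ)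
    have key3 : Aperpᵀ = Q * (Aperp * Aperpᵀ) := by
      calc Aperpᵀ = (P * A + Q * Aperp) * Aperpᵀ := by rw [key1, Matrix.one_mul]
        _ = P * (A * Aperpᵀ) + Q * (Aperp * Aperpᵀ) := by
            rw [Matrix.add_mul, Matrix.mul_assoc, Matrix.mul_assoc]
        _ = Q * (Aperp * Aperpᵀ) := by rw [horth, Matrix.mul_zero, zero_add]
    -- key4 : vecMul-injectivity of Aperp
    have key4 : ∀ x : Fin k → ℂ, x ᵥ* Aperp = 0 → x = 0 := by
      intro x hx
      set y : Fin (n + k) → ℂ := fun i => Sum.elim 0 x (e.symm i) with hy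
      have hyS : y ᵥ* S = 0 := by
        ext j
        have : (y ᵥ* S) j = ∑ s : Fin n ⊕ Fin k, y (e s) * S (e s) j := by
          rw [Matrix.vecMul, dotProduct,
            ← Equiv.sum_comp e (fun l => y l * S l j)]
        rw [this, Fintype.sum_sum_type]
        have h0 : ∀ a : Fin n, y (e (Sum.inl a)) * S (e (Sum.inl a)) j = 0 := by
          intro a; simp [hy]
        have h1 : ∀ b : Fin k, y (e (Sum.inr b)) * S (e (Sum.inr b)) j
            = x b * Aperp b j := by
          intro b; simp [hy, hS, Matrix.fromRows_apply_inr]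
        rw [Finset.sum_congr rfl (fun a _ => h0 a), Finset.sum_congr rfl (fun b _ => h1 b)]
        have := congrFun hx j
        simpa [Matrix.vecMul, dotProduct] using this
      have hy0 : y = 0 := by
        have h2 := congrArg (fun z => z ᵥ* T) hyS
        simpa [Matrix.vecMul_vecMul, hST] using h2
      ext b
      have := congrFun hy0 (e (Sum.inr b))
      simpa [hy] using this
    -- key5 : IsUnit (Aperp * Aperpᵀ)
    have key5 : IsUnit (Aperp * Aperpᵀ) := by
      rw [← Matrix.mulVec_injective_iff_isUnit]
      intro x₁ x₂ hx
      have hsub : (Aperp * Aperpᵀ) *ᵥ (x₁ - x₂) = 0 := by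
        rw [Matrix.mulVec_sub, hx, sub_self]
      have hAt : Aperpᵀ *ᵥ (x₁ - x₂) = 0 := by
        have : Aperpᵀ *ᵥ (x₁ - x₂) = Q *ᵥ ((Aperp * Aperpᵀ) *ᵥ (x₁ - x₂)) := by
          rw [Matrix.mulVec_mulVec, ← key3]
        rw [this, hsub, Matrix.mulVec_zero]
      have : (x₁ - x₂) ᵥ* Aperp = 0 := by rwa [← Matrix.mulVec_transpose]
      have := key4 _ this
      exact sub_eq_zero.mp this
    obtain ⟨c, hc⟩ := key5
    set Cinv : Matrix (Fin k) (Fin k) ℂ := c⁻¹.val with hCinv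
    have hCC : (Aperp * Aperpᵀ) * Cinv = 1 := by
      rw [← hc, hCinv, ← Units.val_mul, mul_inv_cancel]; rfl
    -- M * Q has rank ≤ 1
    have hMQ : (A * B) * Q = ((A * B) * Aperpᵀ) * Cinv := by
      calc (A * B) * Q = (A * B) * Q * ((Aperp * Aperpᵀ) * Cinv) := by
            rw [hCC, Matrix.mul_one]
        _ = ((A * B) * (Q * (Aperp * Aperpᵀ))) * Cinv := by
            simp only [Matrix.mul_assoc]
        _ = ((A * B) * Aperpᵀ) * Cinv := by rw [← key3]
    have hMQrank : ((A * B) * Q).rank ≤ 1 := by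
      rw [hMQ]
      exact (Matrix.rank_mul_le_left _ _).trans hrank
    obtain ⟨f, w, hfw⟩ := exists_vecMulVec_of_rank_le_one _ hMQrank
    refine ⟨((A * B) * P)ᵀ, f, w ᵥ* Aperp, ?_⟩
    have hvv : Matrix.vecMulVec f w * Aperp = Matrix.vecMulVec f (w ᵥ* Aperp) := by
      ext i j
      simp [Matrix.mul_apply, Matrix.vecMulVec_apply, Matrix.vecMul, dotProduct,
        Finset.mul_sum, mul_assoc]
    have hM : A * B = ((A * B) * P) * A + Matrix.vecMulVec f (w ᵥ* Aperp) := by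
      calc A * B = (A * B) * (P * A + Q * Aperp) := by rw [key1, Matrix.mul_one]
        _ = ((A * B) * P) * A + ((A * B) * Q) * Aperp := by
            simp only [Matrix.mul_add, ← Matrix.mul_assoc]
        _ = ((A * B) * P) * A + Matrix.vecMulVec f (w ᵥ* Aperp) := by
            rw [hfw, hvv]
    rw [Matrix.transpose_transpose]
    exact sub_eq_iff_eq_add'.mpr hM
  · rintro ⟨D, f, g, hD⟩
    have hM : A * B = Dᵀ * A + Matrix.vecMulVec f g := by
      rw [← hD]; abel
    have : A * B * Aperpᵀ = Matrix.vecMulVec f (g ᵥ* Aperpᵀ) := by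
      rw [hM, Matrix.add_mul, Matrix.mul_assoc, horth, Matrix.mul_zero, zero_add]
      ext i j
      simp [Matrix.mul_apply, Matrix.vecMulVec_apply, Matrix.vecMul, dotProduct,
        Finset.mul_sum, mul_assoc]
    rw [this]
    exact rank_vecMulVec_le_one _ _
end

section
/- Let A, C be n×N complex matrices, B an N×N complex matrix and D̃ an n×n complex matrix with A·B = D̃·A. Then for any K ∈ ℕ and any t₁,…,t_K ∈ ℂ, det(A · exp(∑_{i=1}^K t_i Bⁱ) · Cᵀ) = exp(∑_{i=1}^K t_i · tr(D̃ⁱ)) · det(A·Cᵀ). -/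
open Matrix BigOperators

open NormedSpace in
private lemma my_hasDerivAt_det_exp_zero {m : ℕ} (M : Matrix (Fin m) (Fin m) ℂ) :
    HasDerivAt (fun h : ℂ => (exp (h • M)).det) M.trace 0 := by
  classical
  letI : SeminormedRing (Matrix (Fin m) (Fin m) ℂ) := Matrix.linftyOpSemiNormedRing
  letI : NormedRing (Matrix (Fin m) (Fin m) ℂ) := Matrix.linftyOpNormedRing
  letI : NormedAlgebra ℂ (Matrix (Fin m) (Fin m) ℂ) := Matrix.linftyOpNormedAlgebra
  -- derivative of each entry at 0
  have hent : ∀ i j : Fin m, HasDerivAt (fun h : ℂ => exp (h • M) i j) (M i j) 0 := by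
    intro i j
    have h1 : HasDerivAt (fun u : ℂ => exp (u • M)) (M * exp ((0 : ℂ) • M)) 0 :=
      hasDerivAt_exp_smul_const' M (0 : ℂ)
    let e : Matrix (Fin m) (Fin m) ℂ →L[ℂ] ℂ :=
      { toFun := fun X => X i j
        map_add' := fun X Y => rfl
        map_smul' := fun c X => rfl
        cont := by exact (continuous_apply j).comp (continuous_apply i) }
    have h2 := e.hasFDerivAt.comp_hasDerivAt 0 h1
    rw [show M * exp ((0 : ℂ) • M) = M by simp [zero_smul, exp_zero, mul_one]] at h2
    exact h2
  -- derivative of each permutation product at 0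
  have hprod : ∀ σ : Equiv.Perm (Fin m),
      HasDerivAt (fun h : ℂ => ∏ i, exp (h • M) (σ i) i)
        (∑ i, (∏ j ∈ Finset.univ.erase i, exp ((0:ℂ) • M) (σ j) j) • M (σ i) i) 0 :=
    fun σ => HasDerivAt.fun_finsetProd (fun i _ => hent (σ i) i)
  have key : HasDerivAt (fun h : ℂ => (exp (h • M)).det)
      (∑ σ : Equiv.Perm (Fin m), (Equiv.Perm.sign σ : ℂ) *
        (∑ i, (∏ j ∈ Finset.univ.erase i, exp ((0:ℂ) • M) (σ j) j) • M (σ i) i)) 0 := by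
    have := HasDerivAt.fun_sum (fun σ (_ : σ ∈ (Finset.univ : Finset (Equiv.Perm (Fin m)))) =>
      ((hprod σ).const_mul ((Equiv.Perm.sign σ : ℤ) : ℂ)))
    convert this using 2 with h
    case e'_4 => rfl
    case e'_5 => rfl
    rw [Matrix.det_apply']
  convert key using 1
  rw [Finset.sum_eq_single (1 : Equiv.Perm (Fin m))]
  · simp [Matrix.trace, Matrix.diag, zero_smul, exp_zero, Matrix.one_apply, smul_eq_mul]
  · intro σ _ hσ
    simp only [zero_smul, exp_zero, smul_eq_mul]
    refine mul_eq_zero_of_right _ (Finset.sum_eq_zero fun i _ => ?_)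
    refine mul_eq_zero_of_left ?_ _
    · obtain ⟨k, hk⟩ : ∃ k, σ k ≠ k := by
        by_contra hc
        push_neg at hc
        exact hσ (Equiv.ext fun x => hc x)
      have hj : ∃ j ∈ Finset.univ.erase i, σ j ≠ j := by
        rcases eq_or_ne k i with rfl | hne
        · refine ⟨σ k, Finset.mem_erase.2 ⟨hk, Finset.mem_univ _⟩, fun hfix => hk ?_⟩
          exact σ.injective hfix
        · exact ⟨k, Finset.mem_erase.2 ⟨hne, Finset.mem_univ _⟩, hk⟩
      obtain ⟨j, hj1, hj2⟩ := hj
      refine Finset.prod_eq_zero hj1 ?_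
      simp [Matrix.one_apply, hj2]
  · intro h1
    exact absurd (Finset.mem_univ _) h1

open NormedSpace in
private lemma my_det_exp {m : ℕ} (M : Matrix (Fin m) (Fin m) ℂ) :
    (exp M).det = Complex.exp M.trace := by
  set f : ℂ → ℂ := fun h => (exp (h • M)).det with hf_def
  have h0 : HasDerivAt f M.trace 0 := my_hasDerivAt_det_exp_zero M
  have hf : ∀ t : ℂ, HasDerivAt f (M.trace * f t) t := by
    intro t
    have key : ∀ s : ℂ, f s = f t * f (s - t) := by
      intro s
      have : s • M = t • M + (s - t) • M := by rw [← add_smul]; ring_nf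
      rw [hf_def]
      simp only
      rw [this, Matrix.exp_add_of_commute (t • M) ((s - t) • M)
        (((Commute.refl M).smul_left t).smul_right (s - t)), Matrix.det_mul]
    have hs : HasDerivAt (fun s : ℂ => f t * f (s - t)) (f t * M.trace) t := by
      have h1 : HasDerivAt (fun s : ℂ => f (s - t)) (M.trace * 1) t := by
        have h0' : HasDerivAt f M.trace (t - t) := by simpa using h0
        have := HasDerivAt.comp (h := fun s : ℂ => s - t) t h0' ((hasDerivAt_id t).sub_const t)
        simpa [Function.comp_def] using this
      simpa using h1.const_mul (f t)
    have := hs.congr_of_eventuallyEq (Filter.Eventually.of_forall key)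
    simpa [mul_comm] using this
  set g : ℂ → ℂ := fun t => f t * Complex.exp (-(M.trace * t)) with hg_def
  have hg : ∀ t : ℂ, HasDerivAt g 0 t := by
    intro t
    have he : HasDerivAt (fun t : ℂ => Complex.exp (-(M.trace * t)))
        (-M.trace * Complex.exp (-(M.trace * t))) t := by
      have h1 : HasDerivAt (fun t : ℂ => -(M.trace * t)) (-M.trace) t := by
        simpa [Pi.neg_def] using ((hasDerivAt_id t).const_mul M.trace).neg
      simpa [mul_comm, Function.comp_def] using (Complex.hasDerivAt_exp (-(M.trace * t))).comp t h1
    have := (hf t).mul he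
    convert this using 1
    case e'_4 => rfl
    case e'_5 => rfl
    case e'_8 => rfl
    ring
  have hconst : g 1 = g 0 :=
    is_const_of_fderiv_eq_zero (fun t => (hg t).differentiableAt)
      (fun t => by
        rw [((hg t).hasFDerivAt).fderiv]
        ext
        simp) 1 0
  have hg0 : g 0 = 1 := by
    simp [hg_def, hf_def, exp_zero]
  have hg1 : g 1 = f 1 * Complex.exp (-(M.trace)) := by simp [hg_def]
  have hf1 : f 1 = (exp M).det := by simp [hf_def]
  rw [hg1, hg0, hf1] at hconst
  have := congrArg (fun z => z * Complex.exp M.trace) hconst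
  simpa [mul_assoc, ← Complex.exp_add] using this

open NormedSpace in
private lemma my_exp_comm {n N : ℕ} (A : Matrix (Fin n) (Fin N) ℂ)
    (S : Matrix (Fin N) (Fin N) ℂ) (S' : Matrix (Fin n) (Fin n) ℂ)
    (h : A * S = S' * A) : A * exp S = exp S' * A := by
  letI : SeminormedRing (Matrix (Fin N) (Fin N) ℂ) := Matrix.linftyOpSemiNormedRing
  letI : NormedRing (Matrix (Fin N) (Fin N) ℂ) := Matrix.linftyOpNormedRing
  letI : NormedAlgebra ℂ (Matrix (Fin N) (Fin N) ℂ) := Matrix.linftyOpNormedAlgebra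
  letI : SeminormedRing (Matrix (Fin n) (Fin n) ℂ) := Matrix.linftyOpSemiNormedRing
  letI : NormedRing (Matrix (Fin n) (Fin n) ℂ) := Matrix.linftyOpNormedRing
  letI : NormedAlgebra ℂ (Matrix (Fin n) (Fin n) ℂ) := Matrix.linftyOpNormedAlgebra
  have hpow : ∀ k : ℕ, A * S ^ k = S' ^ k * A := by
    intro k
    induction k with
    | zero => simp
    | succ k ih =>
        rw [pow_succ, pow_succ, ← Matrix.mul_assoc, ih, Matrix.mul_assoc, h, ← Matrix.mul_assoc]
  let L : Matrix (Fin N) (Fin N) ℂ →L[ℂ] Matrix (Fin n) (Fin N) ℂ :=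
    { toFun := fun X => A * X
      map_add' := fun X Y => Matrix.mul_add _ _ _
      map_smul' := fun c X => (Matrix.mul_smul _ _ _)
      cont := by exact continuous_const.matrix_mul continuous_id }
  let R : Matrix (Fin n) (Fin n) ℂ →L[ℂ] Matrix (Fin n) (Fin N) ℂ :=
    { toFun := fun X => X * A
      map_add' := fun X Y => Matrix.add_mul _ _ _
      map_smul' := fun c X => (Matrix.smul_mul _ _ _)
      cont := by exact continuous_id.matrix_mul continuous_const }
  have h1 : A * exp S = ∑' k : ℕ, ((Nat.factorial k : ℂ))⁻¹ • (A * S ^ k) := by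
    rw [exp_eq_tsum ℂ]
    have := L.map_tsum (expSeries_summable' (𝕂 := ℂ) S)
    simpa [L] using this
  have h2 : exp S' * A = ∑' k : ℕ, ((Nat.factorial k : ℂ))⁻¹ • (S' ^ k * A) := by
    rw [exp_eq_tsum ℂ]
    have := R.map_tsum (expSeries_summable' (𝕂 := ℂ) S')
    simpa [R] using this
  rw [h1, h2]
  congr 1
  ext k
  rw [hpow]

/-- If `A·B = D̃·A`, then
`det(A · exp(∑ tᵢ Bⁱ) · Cᵀ) = exp(∑ tᵢ tr(D̃ⁱ)) · det(A·Cᵀ)`. -/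
theorem stmt1 (n N : ℕ) (A C : Matrix (Fin n) (Fin N) ℂ)
    (B : Matrix (Fin N) (Fin N) ℂ) (Dt : Matrix (Fin n) (Fin n) ℂ)
    (h : A * B = Dt * A) (K : ℕ) (t : Fin K → ℂ) :
    (A * NormedSpace.exp (∑ i : Fin K, t i • B ^ ((i : ℕ) + 1)) * Cᵀ).det
      = Complex.exp (∑ i : Fin K, t i * (Dt ^ ((i : ℕ) + 1)).trace) * (A * Cᵀ).det := by
  have hpow : ∀ k : ℕ, A * B ^ k = Dt ^ k * A := by
    intro k
    induction k with
    | zero => simp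
    | succ k ih =>
        rw [pow_succ, pow_succ, ← Matrix.mul_assoc, ih, Matrix.mul_assoc, h, ← Matrix.mul_assoc]
  set S := ∑ i : Fin K, t i • B ^ ((i : ℕ) + 1) with hS
  set S' := ∑ i : Fin K, t i • Dt ^ ((i : ℕ) + 1) with hS'
  have hAS : A * S = S' * A := by
    rw [hS, hS', Matrix.mul_sum, Matrix.sum_mul]
    refine Finset.sum_congr rfl fun i _ => ?_
    rw [Matrix.mul_smul, Matrix.smul_mul, hpow]
  have hcomm := my_exp_comm A S S' hAS
  rw [hcomm, Matrix.mul_assoc, Matrix.det_mul, my_det_exp]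
  congr 1
  · congr 1
    rw [hS', Matrix.trace_sum]
    refine Finset.sum_congr rfl fun i _ => ?_
    rw [Matrix.trace_smul, smul_eq_mul]
end

section
/- Let n, k ≥ 1, N = n + k, and let β₁,…,β_N ∈ ℂ be pairwise distinct. Let V_{n,N}(β) be the truncated Vandermonde matrix, B = diag(β₁,…,β_N), and let W be the k×N matrix with entries W_{b,j} = β_j^{k−b} / ∏_{l≠j}(β_j − β_l) for 1 ≤ b ≤ k, 1 ≤ j ≤ N. Then (i) V_{n,N}(β)·Wᵀ = 0, and (ii) V_{n,N}(β)·B·Wᵀ is the n×k matrix whose (1,1) entry is 1 and all other entries are 0. -/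
open Matrix BigOperators

/-- The truncated Vandermonde matrix `V_{n,N}(β)` with entries `β_j^{n−a}` for `1 ≤ a ≤ n`
(`0`-based: row `a` has entries `β_j^(n−1−a)`). -/
def vdm (n N : ℕ) (β : Fin N → ℂ) : Matrix (Fin n) (Fin N) ℂ :=
  Matrix.of fun a j => β j ^ (n - 1 - (a : ℕ))

open Polynomial Finset in
lemma key_sum {N : ℕ} (hN : 0 < N) (β : Fin N → ℂ) (hβ : Function.Injective β)
    (m : ℕ) (hm : m < N) :
    ∑ j, β j ^ m / ∏ l ∈ Finset.univ.erase j, (β j - β l)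
      = if m = N - 1 then 1 else 0 := by
  classical
  have hinj : Set.InjOn β (Finset.univ : Finset (Fin N)) := hβ.injOn
  have hcard : #(Finset.univ : Finset (Fin N)) = N := by simp
  have hdeg : (X ^ m : ℂ[X]).degree < #(Finset.univ : Finset (Fin N)) := by
    rw [degree_X_pow, hcard]; exact_mod_cast hm
  have h := Lagrange.eq_interpolate (v := β) hinj hdeg
  have hco := congrArg (fun p : ℂ[X] => p.coeff (N - 1)) h
  simp only [coeff_X_pow, Lagrange.interpolate_apply, finset_sum_coeff, coeff_C_mul] at hco
  have hbasis : ∀ j : Fin N, (Lagrange.basis Finset.univ β j).coeff (N - 1)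
      = (∏ l ∈ Finset.univ.erase j, (β j - β l))⁻¹ := by
    intro j
    have hnd : (Lagrange.basis Finset.univ β j).natDegree = N - 1 := by
      rw [Lagrange.natDegree_basis hinj (mem_univ j), hcard]
    rw [← hnd, ← leadingCoeff, Lagrange.basis, leadingCoeff_prod, ← Finset.prod_inv_distrib]
    refine Finset.prod_congr rfl fun l hl => ?_
    have hne : β j ≠ β l := fun h => (Finset.mem_erase.mp hl).1.symm (hβ h)
    rw [Lagrange.basisDivisor, leadingCoeff_mul, leadingCoeff_C,
      (monic_X_sub_C (β l)).leadingCoeff, mul_one]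
  have : ∀ j : Fin N, eval (β j) (X ^ m : ℂ[X]) = β j ^ m := by simp
  simp only [this, hbasis] at hco
  simp only [div_eq_mul_inv]
  rw [← hco]
  by_cases h : N - 1 = m
  · simp [h]
  · simp [h, Ne.symm h]

/-- For `N = n + k` and pairwise distinct `β`, with
`W_{b,j} = β_j^{k−b} / ∏_{l≠j}(β_j − β_l)`:
(i) `V_{n,N}(β)·Wᵀ = 0`, and (ii) `V_{n,N}(β)·diag(β)·Wᵀ` has `(1,1)` entry `1` and all
other entries `0`. -/
theorem stmt5 (n k : ℕ) (hn : 0 < n) (hk : 0 < k) (β : Fin (n + k) → ℂ)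
    (hβ : Function.Injective β)
    (W : Matrix (Fin k) (Fin (n + k)) ℂ)
    (hW : W = Matrix.of fun (b : Fin k) (j : Fin (n + k)) =>
      β j ^ (k - 1 - (b : ℕ)) / ∏ l ∈ Finset.univ.erase j, (β j - β l)) :
    vdm n (n + k) β * Wᵀ = 0 ∧
      vdm n (n + k) β * Matrix.diagonal β * Wᵀ
        = Matrix.of (fun (a : Fin n) (b : Fin k) =>
            if (a : ℕ) = 0 ∧ (b : ℕ) = 0 then (1 : ℂ) else 0) := by
  have hN : 0 < n + k := by omega
  constructor
  · ext a b
    simp only [Matrix.mul_apply, Matrix.transpose_apply, hW, Matrix.of_apply, vdm,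
      Matrix.zero_apply]
    have := key_sum hN β hβ ((n - 1 - (a : ℕ)) + (k - 1 - (b : ℕ)))
      (by have := a.2; have := b.2; omega)
    rw [if_neg (by have := a.2; have := b.2; omega)] at this
    rw [← this]
    refine Finset.sum_congr rfl fun j _ => ?_
    rw [pow_add, mul_div_assoc]
  · ext a b
    rw [Matrix.mul_apply]
    simp only [Matrix.mul_diagonal, Matrix.transpose_apply, hW, Matrix.of_apply, vdm]
    have := key_sum hN β hβ ((n - 1 - (a : ℕ)) + 1 + (k - 1 - (b : ℕ)))
      (by have := a.2; have := b.2; omega)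
    have hiff : ((a : ℕ) = 0 ∧ (b : ℕ) = 0) ↔
        (n - 1 - (a : ℕ)) + 1 + (k - 1 - (b : ℕ)) = n + k - 1 := by
      have := a.2; have := b.2; omega
    rw [show (if (a : ℕ) = 0 ∧ (b : ℕ) = 0 then (1 : ℂ) else 0)
        = (if (n - 1 - (a : ℕ)) + 1 + (k - 1 - (b : ℕ)) = n + k - 1 then (1 : ℂ) else 0) by
      by_cases h : (a : ℕ) = 0 ∧ (b : ℕ) = 0
      · rw [if_pos h, if_pos (hiff.mp h)]
      · rw [if_neg h, if_neg (fun hc => h (hiff.mpr hc))], ← this]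
    refine Finset.sum_congr rfl fun j _ => ?_
    rw [pow_add, pow_add, pow_one, mul_div_assoc]
end

section
/- Let n, k ≥ 1, N = n + k, and let β₁,…,β_N, δ₁,…,δ_N ∈ ℂ be 2N pairwise distinct complex numbers. Set r(z) = ∏_{i=1}^N (z − δ_i) and p'(β_j) = ∏_{l≠j}(β_j − β_l). Let A⁰ be the n×N matrix with entries A⁰_{i,j} = 1/(β_j − δ_i) for 1 ≤ i ≤ n, let B = diag(β₁,…,β_N), and let W be the k×N matrix with entries W_{b,j} = r(β_j) / ((β_j − δ_{n+b}) · p'(β_j)) for 1 ≤ b ≤ k. Then (i) A⁰·Wᵀ = 0, and (ii) A⁰·B·Wᵀ is the n×k all-ones matrix. -/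
open Matrix BigOperators Polynomial

lemma leadingCoeff_lagBasis {ι : Type*} [DecidableEq ι]
    (s : Finset ι) (v : ι → ℂ) {i : ι} :
    (Lagrange.basis s v i).leadingCoeff = (∏ j ∈ s.erase i, (v i - v j))⁻¹ := by
  rw [Lagrange.basis, Polynomial.leadingCoeff_prod, ← Finset.prod_inv_distrib]
  refine Finset.prod_congr rfl fun j hj => ?_
  rw [Lagrange.basisDivisor, leadingCoeff_mul, leadingCoeff_C,
    (monic_X_sub_C (v j)).leadingCoeff, mul_one]

lemma lag_coeff {M : ℕ} (v : Fin M → ℂ) (hv : Function.Injective v)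
    (f : Polynomial ℂ) (hf : f.degree < (M : WithBot ℕ)) :
    f.coeff (M - 1) = ∑ j, f.eval (v j) * (∏ l ∈ Finset.univ.erase j, (v j - v l))⁻¹ := by
  classical
  have hvs : Set.InjOn v (Finset.univ : Finset (Fin M)) := hv.injOn
  have hcard : (Finset.univ : Finset (Fin M)).card = M := by simp
  have h := Lagrange.eq_interpolate hvs (by rw [hcard]; exact hf)
  calc f.coeff (M - 1)
      = (Lagrange.interpolate Finset.univ v fun i => f.eval (v i)).coeff (M - 1) := by rw [← h]
    _ = ∑ j, (Polynomial.C (f.eval (v j)) * Lagrange.basis Finset.univ v j).coeff (M - 1) := by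
        rw [Lagrange.interpolate_apply, Polynomial.finset_sum_coeff]
    _ = _ := by
        refine Finset.sum_congr rfl fun j _ => ?_
        have hdeg : (Lagrange.basis Finset.univ v j).degree = ((M - 1 : ℕ) : WithBot ℕ) := by
          rw [Lagrange.degree_basis hvs (Finset.mem_univ j), hcard]
        have hnd : (Lagrange.basis Finset.univ v j).natDegree = M - 1 :=
          Polynomial.natDegree_eq_of_degree_eq_some hdeg
        rw [Polynomial.coeff_C_mul]
        congr 1
        rw [← leadingCoeff_lagBasis Finset.univ v, Polynomial.leadingCoeff, hnd]

/-- For `N = n + k` and `2N` pairwise distinct numbers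
`β₁,…,β_N, δ₁,…,δ_N`, with `A⁰_{i,j} = 1/(β_j − δ_i)` (`1 ≤ i ≤ n`), `B = diag(β)` and
`W_{b,j} = r(β_j)/((β_j − δ_{n+b})·p'(β_j))` where `r(z) = ∏ᵢ(z − δᵢ)` and
`p'(β_j) = ∏_{l≠j}(β_j − β_l)`: (i) `A⁰·Wᵀ = 0`, (ii) `A⁰·B·Wᵀ` is the all-ones matrix. -/
theorem stmt7 (n k : ℕ) (hn : 0 < n) (hk : 0 < k)
    (β δ : Fin (n + k) → ℂ)
    (hdist : Function.Injective (Sum.elim β δ : Fin (n + k) ⊕ Fin (n + k) → ℂ))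
    (A0 : Matrix (Fin n) (Fin (n + k)) ℂ)
    (hA0 : A0 = Matrix.of fun (i : Fin n) (j : Fin (n + k)) =>
      1 / (β j - δ (Fin.castAdd k i)))
    (W : Matrix (Fin k) (Fin (n + k)) ℂ)
    (hW : W = Matrix.of fun (b : Fin k) (j : Fin (n + k)) =>
      (∏ i, (β j - δ i)) /
        ((β j - δ (Fin.natAdd n b)) * ∏ l ∈ Finset.univ.erase j, (β j - β l))) :
    A0 * Wᵀ = 0 ∧
      A0 * Matrix.diagonal β * Wᵀ
        = Matrix.of fun (_ : Fin n) (_ : Fin k) => (1 : ℂ) := by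
  classical
  have hN2 : 2 ≤ n + k := by omega
  have hβδ : ∀ j m, β j ≠ δ m := by
    intro j m h
    have := hdist (show (Sum.elim β δ) (Sum.inl j) = (Sum.elim β δ) (Sum.inr m) from h)
    simp at this
  have hβ : Function.Injective β := by
    intro a b h
    have := hdist (show (Sum.elim β δ) (Sum.inl a) = (Sum.elim β δ) (Sum.inl b) from h)
    simpa using this
  have hP : ∀ j : Fin (n + k), (∏ l ∈ Finset.univ.erase j, (β j - β l)) ≠ 0 := by
    intro j
    refine Finset.prod_ne_zero_iff.mpr fun l hl => sub_ne_zero.mpr fun h => ?_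
    exact (Finset.mem_erase.mp hl).1 (hβ h.symm)
  -- main computation for fixed i, b
  have key : ∀ (i : Fin n) (b : Fin k),
      (∑ j, (1 / (β j - δ (Fin.castAdd k i))) *
        ((∏ m, (β j - δ m)) /
          ((β j - δ (Fin.natAdd n b)) * ∏ l ∈ Finset.univ.erase j, (β j - β l))) = 0) ∧
      (∑ j, (1 / (β j - δ (Fin.castAdd k i))) * β j *
        ((∏ m, (β j - δ m)) /
          ((β j - δ (Fin.natAdd n b)) * ∏ l ∈ Finset.univ.erase j, (β j - β l))) = 1) := by
    intro i b
    set i' : Fin (n + k) := Fin.castAdd k i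
    set b' : Fin (n + k) := Fin.natAdd n b
    have hib : i' ≠ b' := by
      intro h
      have : (i' : ℕ) = (b' : ℕ) := congrArg Fin.val h
      simp [i', b'] at this; omega
    set t : Finset (Fin (n + k)) := (Finset.univ.erase i').erase b' with ht
    have hb'mem : b' ∈ Finset.univ.erase i' := Finset.mem_erase.mpr ⟨Ne.symm hib, Finset.mem_univ _⟩
    have htcard : t.card = n + k - 2 := by
      rw [ht, Finset.card_erase_of_mem hb'mem, Finset.card_erase_of_mem (Finset.mem_univ _)]
      simp
      omega
    set f : Polynomial ℂ := ∏ m ∈ t, (X - C (δ m)) with hf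
    have hmon : f.Monic := monic_prod_of_monic _ _ fun m _ => monic_X_sub_C _
    have hfnd : f.natDegree = n + k - 2 := by
      rw [hf, Polynomial.natDegree_prod _ _ fun m _ => X_sub_C_ne_zero (δ m)]
      simp [htcard]
    have hsplit : ∀ j, (∏ m, (β j - δ m)) =
        (β j - δ i') * ((β j - δ b') * ∏ m ∈ t, (β j - δ m)) := by
      intro j
      rw [← Finset.mul_prod_erase _ _ (Finset.mem_univ i'), ← Finset.mul_prod_erase _ _ hb'mem]
    have heval : ∀ j, f.eval (β j) = ∏ m ∈ t, (β j - δ m) := by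
      intro j; simp [hf, Polynomial.eval_prod]
    have hterm : ∀ j, (1 / (β j - δ i')) *
        ((∏ m, (β j - δ m)) / ((β j - δ b') * ∏ l ∈ Finset.univ.erase j, (β j - β l)))
        = f.eval (β j) * (∏ l ∈ Finset.univ.erase j, (β j - β l))⁻¹ := by
      intro j
      have h1 : β j - δ i' ≠ 0 := sub_ne_zero.mpr (hβδ j i')
      have h2 : β j - δ b' ≠ 0 := sub_ne_zero.mpr (hβδ j b')
      have h3 := hP j
      rw [hsplit j, heval j]
      field_simp
    constructor
    · have hdeg : f.degree < ((n + k : ℕ) : WithBot ℕ) := by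
        refine lt_of_le_of_lt Polynomial.degree_le_natDegree ?_
        rw [hfnd]; exact_mod_cast Nat.sub_lt (by omega) (by omega)
      calc ∑ j, (1 / (β j - δ i')) *
            ((∏ m, (β j - δ m)) / ((β j - δ b') * ∏ l ∈ Finset.univ.erase j, (β j - β l)))
            = ∑ j, f.eval (β j) * (∏ l ∈ Finset.univ.erase j, (β j - β l))⁻¹ :=
              Finset.sum_congr rfl fun j _ => hterm j
        _ = 0 := by
            rw [← lag_coeff β hβ f hdeg]
            exact Polynomial.coeff_eq_zero_of_natDegree_lt (by omega)
    · set g : Polynomial ℂ := X * f with hg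
      have hgnd : g.natDegree = n + k - 1 := by
        rw [hg, Polynomial.natDegree_mul X_ne_zero hmon.ne_zero, Polynomial.natDegree_X, hfnd]
        omega
      have hdeg : g.degree < ((n + k : ℕ) : WithBot ℕ) := by
        refine lt_of_le_of_lt Polynomial.degree_le_natDegree ?_
        rw [hgnd]; exact_mod_cast Nat.sub_lt (by omega) (by omega)
      have hcoeff : g.coeff (n + k - 1) = 1 := by
        have : n + k - 1 = (n + k - 2) + 1 := by omega
        rw [hg, this, Polynomial.coeff_X_mul, ← hfnd]
        exact hmon
      calc ∑ j, (1 / (β j - δ i')) * β j *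
            ((∏ m, (β j - δ m)) / ((β j - δ b') * ∏ l ∈ Finset.univ.erase j, (β j - β l)))
          = ∑ j, g.eval (β j) * (∏ l ∈ Finset.univ.erase j, (β j - β l))⁻¹ := by
            refine Finset.sum_congr rfl fun j _ => ?_
            have h := hterm j
            have hge : Polynomial.eval (β j) g = β j * Polynomial.eval (β j) f := by
              rw [hg]; simp
            rw [hge]
            linear_combination β j * h
        _ = 1 := by rw [← lag_coeff β hβ g hdeg]; exact hcoeff
  constructor
  · ext i b
    rw [Matrix.mul_apply]
    simp only [hA0, hW, Matrix.transpose_apply, Matrix.of_apply, Matrix.zero_apply]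
    exact (key i b).1
  · ext i b
    rw [Matrix.mul_apply]
    simp only [Matrix.mul_diagonal, hA0, hW, Matrix.transpose_apply, Matrix.of_apply]
    exact (key i b).2
end

section
/- Let n ≤ N, let δ₁,…,δ_n ∈ ℂ be pairwise distinct and β₁,…,β_N ∈ ℂ satisfy β_j ≠ δ_b for all b, j. Set r(z) = ∏_{b=1}^n (z − δ_b) and r'(δ_b) = ∏_{c≠b}(δ_b − δ_c). Let K be the n×n matrix with entries K_{a,b} = δ_b^{n−a} / r'(δ_b), let A⁰ be the n×N Cauchy matrix with entries A⁰_{b,j} = 1/(β_j − δ_b), and let R = diag(r(β₁),…,r(β_N)). Then K·A⁰·R = V_{n,N}(β). -/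
open Matrix BigOperators

open Polynomial in
/-- Lagrange interpolation identity for power functions. -/
lemma lagrange_power {n : ℕ} (δ : Fin n → ℂ) (hδ : Function.Injective δ)
    (x : ℂ) (hx : ∀ b, x ≠ δ b) {m : ℕ} (hm : m < n) :
    ∑ b, δ b ^ m / (∏ c ∈ Finset.univ.erase b, (δ b - δ c)) * (1 / (x - δ b)) *
      ∏ c, (x - δ c) = x ^ m := by
  have hvs : Set.InjOn δ (Finset.univ : Finset (Fin n)) := hδ.injOn
  have hdeg : (X ^ m : ℂ[X]).degree < ((Finset.univ : Finset (Fin n)).card : ℕ) := by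
    rw [Polynomial.degree_X_pow, Finset.card_univ, Fintype.card_fin]
    exact_mod_cast hm
  have h := Lagrange.eq_interpolate (v := δ) (s := Finset.univ) hvs hdeg
  have h2 := congrArg (Polynomial.eval x) h
  simp only [Lagrange.interpolate_apply, Polynomial.eval_finset_sum, Polynomial.eval_mul,
    Polynomial.eval_C, Polynomial.eval_pow, Polynomial.eval_X] at h2
  rw [h2]
  refine Finset.sum_congr rfl fun b _ => ?_
  have hev : Polynomial.eval x (Lagrange.basis Finset.univ δ b)
      = ∏ c ∈ Finset.univ.erase b, ((x - δ c) * (δ b - δ c)⁻¹) := by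
    rw [Lagrange.basis, Polynomial.eval_prod]
    refine Finset.prod_congr rfl fun c _ => ?_
    simp [Lagrange.basisDivisor]; ring
  rw [hev, Finset.prod_mul_distrib, Finset.prod_inv_distrib]
  have hprod : ∏ c, (x - δ c) = (x - δ b) * ∏ c ∈ Finset.univ.erase b, (x - δ c) :=
    (Finset.mul_prod_erase _ _ (Finset.mem_univ b)).symm
  rw [hprod]
  have hxb : x - δ b ≠ 0 := sub_ne_zero.mpr (hx b)
  have hP : ∏ c ∈ Finset.univ.erase b, (δ b - δ c) ≠ 0 :=
    Finset.prod_ne_zero_iff.mpr fun c hc =>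
      sub_ne_zero.mpr fun h => (Finset.mem_erase.mp hc).1 (hδ h).symm
  field_simp

/-- With `K_{a,b} = δ_b^{n−a}/r'(δ_b)`, `A⁰_{b,j} = 1/(β_j − δ_b)` and
`R = diag(r(β₁),…,r(β_N))` where `r(z) = ∏_b (z − δ_b)` and
`r'(δ_b) = ∏_{c≠b}(δ_b − δ_c)`, one has `K·A⁰·R = V_{n,N}(β)`. -/
theorem stmt8 (n N : ℕ) (hn : 0 < n) (hnN : n ≤ N)
    (δ : Fin n → ℂ) (hδ : Function.Injective δ)
    (β : Fin N → ℂ) (hβδ : ∀ b j, β j ≠ δ b)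
    (K : Matrix (Fin n) (Fin n) ℂ)
    (hK : K = Matrix.of fun (a b : Fin n) =>
      δ b ^ (n - 1 - (a : ℕ)) / ∏ c ∈ Finset.univ.erase b, (δ b - δ c))
    (A0 : Matrix (Fin n) (Fin N) ℂ)
    (hA0 : A0 = Matrix.of fun (b : Fin n) (j : Fin N) => 1 / (β j - δ b)) :
    K * A0 * Matrix.diagonal (fun j => ∏ b, (β j - δ b)) = vdm n N β := by
  ext a j
  rw [Matrix.mul_apply]
  simp only [Matrix.diagonal, Matrix.of_apply, Matrix.mul_apply, hK, hA0]
  rw [Finset.sum_eq_single j (by intro c _ hc; simp [hc]) (by simp)]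
  simp only [if_pos rfl]
  rw [Finset.sum_mul]
  have hm : n - 1 - (a : ℕ) < n := by omega
  simpa [vdm] using lagrange_power δ hδ (β j) (fun b => hβδ b j) hm
end

section
/- Let p, q ≥ 1, let β, δ ∈ ℂ with β ≠ δ, and let 𝒜 be the p×q complex matrix with entries 𝒜_{μ,ν} = C(μ+ν−2, ν−1) · (−1)^{ν+1} / (β−δ)^{μ+ν−1} for 1 ≤ μ ≤ p, 1 ≤ ν ≤ q, where C(·,·) is the binomial coefficient. Let J_q(β) = β·I_q + Λ_q and J_p(δ) = δ·I_p + Λ_p be Jordan blocks. Then 𝒜·J_q(β) − J_p(δ)ᵀ·𝒜 is the p×q matrix whose (1,1) entry is 1 and all other entries are 0. -/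
open Matrix BigOperators

/-- The `n × n` upper-triangular shift matrix `Λ_n`. -/
def shiftMat (n : ℕ) : Matrix (Fin n) (Fin n) ℂ :=
  Matrix.of fun a b => if (b : ℕ) = (a : ℕ) + 1 then 1 else 0

lemma sum_shift {n : ℕ} (ν : Fin n) (f : Fin n → ℂ) :
    (∑ k : Fin n, if (ν : ℕ) = (k : ℕ) + 1 then f k else 0) =
      if h : 0 < (ν : ℕ) then f ⟨(ν : ℕ) - 1, lt_of_le_of_lt (Nat.pred_le _) ν.2⟩ else 0 := by
  split_ifs with h
  · rw [Finset.sum_eq_single (⟨(ν : ℕ) - 1, lt_of_le_of_lt (Nat.pred_le _) ν.2⟩ : Fin n)]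
    · exact if_pos (Nat.succ_pred_eq_of_pos h).symm
    · intro b _ hb
      rw [if_neg]
      intro hc
      apply hb
      apply Fin.ext
      simp [hc]
    · intro h'; exact absurd (Finset.mem_univ _) h'
  · apply Finset.sum_eq_zero
    intro k _
    rw [if_neg]
    omega

/-- For `𝒜_{μ,ν} = C(μ+ν−2, ν−1)·(−1)^{ν+1}/(β−δ)^{μ+ν−1}` (`1`-based;
`0`-based: `𝒜_{μ,ν} = C(μ+ν, ν)·(−1)^ν/(β−δ)^{μ+ν+1}`) and Jordan blocks
`J_q(β) = β·I_q + Λ_q`, `J_p(δ) = δ·I_p + Λ_p`, the matrix `𝒜·J_q(β) − J_p(δ)ᵀ·𝒜`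
has `(1,1)` entry `1` and all others `0`. -/
theorem stmt9 (p q : ℕ) (hp : 0 < p) (hq : 0 < q) (β δ : ℂ) (hβδ : β ≠ δ)
    (A : Matrix (Fin p) (Fin q) ℂ)
    (hA : A = Matrix.of fun (μ : Fin p) (ν : Fin q) =>
      (Nat.choose ((μ : ℕ) + (ν : ℕ)) (ν : ℕ) : ℂ) * (-1) ^ (ν : ℕ)
        / (β - δ) ^ ((μ : ℕ) + (ν : ℕ) + 1)) :
    A * (β • (1 : Matrix (Fin q) (Fin q) ℂ) + shiftMat q)
      - (δ • (1 : Matrix (Fin p) (Fin p) ℂ) + shiftMat p)ᵀ * A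
      = Matrix.of fun (μ : Fin p) (ν : Fin q) =>
          if (μ : ℕ) = 0 ∧ (ν : ℕ) = 0 then (1 : ℂ) else 0 := by
  have hc : β - δ ≠ 0 := sub_ne_zero.mpr hβδ
  have expand : A * (β • (1 : Matrix (Fin q) (Fin q) ℂ) + shiftMat q)
      - (δ • (1 : Matrix (Fin p) (Fin p) ℂ) + shiftMat p)ᵀ * A
      = (β - δ) • A + (A * shiftMat q - (shiftMat p)ᵀ * A) := by
    simp only [Matrix.mul_add, Matrix.add_mul, Matrix.transpose_add, Matrix.transpose_smul,
      Matrix.transpose_one, Matrix.mul_smul, Matrix.smul_mul, Matrix.mul_one, Matrix.one_mul,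
      sub_smul]
    abel
  rw [expand]
  ext μ ν
  have h1 : (A * shiftMat q) μ ν =
      if h : 0 < (ν : ℕ) then A μ ⟨(ν : ℕ) - 1, lt_of_le_of_lt (Nat.pred_le _) ν.2⟩ else 0 := by
    rw [Matrix.mul_apply, ← sum_shift ν (fun k => A μ k)]
    apply Finset.sum_congr rfl
    intro k _
    simp [shiftMat, mul_ite]
  have h2 : ((shiftMat p)ᵀ * A) μ ν =
      if h : 0 < (μ : ℕ) then A ⟨(μ : ℕ) - 1, lt_of_le_of_lt (Nat.pred_le _) μ.2⟩ ν else 0 := by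
    rw [Matrix.mul_apply, ← sum_shift μ (fun k => A k ν)]
    apply Finset.sum_congr rfl
    intro k _
    simp [shiftMat, Matrix.transpose_apply, ite_mul]
  simp only [Matrix.add_apply, Matrix.sub_apply, Matrix.smul_apply, smul_eq_mul, h1, h2,
    Matrix.of_apply]
  rcases Nat.eq_zero_or_pos (μ : ℕ) with hμ | hμ <;>
    rcases Nat.eq_zero_or_pos (ν : ℕ) with hν | hν
  · rw [dif_neg (by omega), dif_neg (by omega), if_pos ⟨hμ, hν⟩]
    simp [hA, hμ, hν]
    field_simp
  · obtain ⟨n, hn⟩ : ∃ n, (ν : ℕ) = n + 1 := ⟨(ν : ℕ) - 1, by omega⟩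
    rw [dif_pos hν, dif_neg (by omega), if_neg (by omega)]
    simp only [hA, Matrix.of_apply, hμ, hn]
    simp only [Nat.add_succ_sub_one, zero_add]
    rw [Nat.choose_self, Nat.choose_self]
    field_simp
    ring
  · obtain ⟨m, hm⟩ : ∃ m, (μ : ℕ) = m + 1 := ⟨(μ : ℕ) - 1, by omega⟩
    rw [dif_neg (by omega), dif_pos hμ, if_neg (by omega)]
    simp only [hA, Matrix.of_apply, hν, hm]
    simp only [Nat.add_succ_sub_one, Nat.add_zero, Nat.choose_zero_right]
    field_simp
    ring
  · obtain ⟨m, hm⟩ : ∃ m, (μ : ℕ) = m + 1 := ⟨(μ : ℕ) - 1, by omega⟩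
    obtain ⟨n, hn⟩ : ∃ n, (ν : ℕ) = n + 1 := ⟨(ν : ℕ) - 1, by omega⟩
    rw [dif_pos hν, dif_pos hμ, if_neg (by omega)]
    simp only [hA, Matrix.of_apply, hm, hn]
    simp only [Nat.add_succ_sub_one]
    have pascal : (m + 1 + (n + 1)).choose (n + 1)
        = (m + 1 + n).choose n + (m + n + 1).choose (n + 1) := by
      have : m + 1 + (n + 1) = (m + n + 1) + 1 := by ring
      rw [this, Nat.choose_succ_succ]
      congr 1
      · congr 1; omega
    rw [pascal]
    push_cast
    field_simp
    ring
end

section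
/- Let m, M ≥ 1, let n₁,…,n_m ≥ 1 and N₁,…,N_M ≥ 1 be block sizes, and let δ₁,…,δ_m, β₁,…,β_M ∈ ℂ satisfy β_j ≠ δ_i for all i, j. Index rows by pairs (i,μ) with 1 ≤ i ≤ m, 1 ≤ μ ≤ n_i and columns by pairs (j,ν) with 1 ≤ j ≤ M, 1 ≤ ν ≤ N_j. Let D be the block-diagonal Jordan matrix with blocks J_{n_i}(δ_i) and B the block-diagonal Jordan matrix with blocks J_{N_j}(β_j). Let A⁰ be the matrix with entries A⁰_{(i,μ),(j,ν)} = C(μ+ν−2, ν−1)·(−1)^{ν+1}/(β_j−δ_i)^{μ+ν−1}, and let f, g be the vectors with entries f_{(i,μ)} = δ_{μ,1} and g_{(j,ν)} = δ_{ν,1}. Then A⁰·B − Dᵀ·A⁰ = f·gᵀ. -/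
open Matrix BigOperators

lemma sum_if_val {n : ℕ} (F : Fin n → ℂ) (k : ℕ) :
    ∑ x : Fin n, (if (x : ℕ) = k then F x else 0)
      = if h : k < n then F ⟨k, h⟩ else 0 := by
  split_ifs with h
  · rw [Finset.sum_eq_single (⟨k, h⟩ : Fin n)]
    · simp
    · intro b _ hb
      rw [if_neg]
      exact fun he => hb (Fin.ext he)
    · simp
  · apply Finset.sum_eq_zero
    intro x _
    have : (x : ℕ) ≠ k := fun he => h (he ▸ x.isLt)
    simp [this]

lemma sum_if_val' {n : ℕ} (F : Fin n → ℂ) (k : ℕ) :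
    ∑ x : Fin n, (if k = (x : ℕ) then F x else 0)
      = if h : k < n then F ⟨k, h⟩ else 0 := by
  rw [← sum_if_val F k]
  exact Finset.sum_congr rfl fun x _ => by
    by_cases h : (x : ℕ) = k
    · rw [if_pos h, if_pos h.symm]
    · rw [if_neg h, if_neg (fun he => h he.symm)]

lemma if_zero_eq_succ (x : ℕ) (a : ℂ) : (if 0 = x + 1 then a else 0) = 0 := by simp

/-- The block-diagonal Jordan matrix with blocks `J_{sz i}(ev i)`, indexed by pairs
`(i, μ)` with `μ ∈ Fin (sz i)`: entries
`[i=i']·(ev i·[μ=μ'] + [μ'=μ+1])`. -/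
def blockJordan {m : ℕ} (sz : Fin m → ℕ) (ev : Fin m → ℂ) :
    Matrix ((i : Fin m) × Fin (sz i)) ((i : Fin m) × Fin (sz i)) ℂ :=
  Matrix.of fun p q =>
    if p.1 = q.1 then
      (if (p.2 : ℕ) = (q.2 : ℕ) then ev p.1 else 0)
        + (if (q.2 : ℕ) = (p.2 : ℕ) + 1 then 1 else 0)
    else 0

/-- With block-diagonal Jordan matrices `D` (blocks `J_{n_i}(δ_i)`) and
`B` (blocks `J_{N_j}(β_j)`), `β_j ≠ δ_i`, and
`A⁰_{(i,μ),(j,ν)} = C(μ+ν−2, ν−1)·(−1)^{ν+1}/(β_j−δ_i)^{μ+ν−1}` (`1`-based; here written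
`0`-based), with `f_{(i,μ)} = δ_{μ,1}` and `g_{(j,ν)} = δ_{ν,1}`:
`A⁰·B − Dᵀ·A⁰ = f·gᵀ`. -/
theorem stmt10 (m M : ℕ) (hm : 0 < m) (hM : 0 < M)
    (nsz : Fin m → ℕ) (Nsz : Fin M → ℕ)
    (hnsz : ∀ i, 1 ≤ nsz i) (hNsz : ∀ j, 1 ≤ Nsz j)
    (δ : Fin m → ℂ) (β : Fin M → ℂ) (hβδ : ∀ i j, β j ≠ δ i)
    (A0 : Matrix ((i : Fin m) × Fin (nsz i)) ((j : Fin M) × Fin (Nsz j)) ℂ)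
    (hA0 : A0 = Matrix.of fun (p : (i : Fin m) × Fin (nsz i))
        (q : (j : Fin M) × Fin (Nsz j)) =>
      (Nat.choose ((p.2 : ℕ) + (q.2 : ℕ)) (q.2 : ℕ) : ℂ) * (-1) ^ (q.2 : ℕ)
        / (β q.1 - δ p.1) ^ ((p.2 : ℕ) + (q.2 : ℕ) + 1)) :
    A0 * blockJordan Nsz β - (blockJordan nsz δ)ᵀ * A0
      = Matrix.vecMulVec
          (fun p : (i : Fin m) × Fin (nsz i) => if (p.2 : ℕ) = 0 then (1 : ℂ) else 0)
          (fun q : (j : Fin M) × Fin (Nsz j) => if (q.2 : ℕ) = 0 then (1 : ℂ) else 0) := by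
  subst hA0
  ext ⟨i, μ⟩ ⟨j, ν⟩
  have hc : β j - δ i ≠ 0 := sub_ne_zero.mpr (hβδ i j)
  simp only [Matrix.sub_apply, Matrix.mul_apply, Matrix.transpose_apply,
    Matrix.vecMulVec_apply, Matrix.of_apply, blockJordan]
  rw [← Finset.univ_sigma_univ, Finset.sum_sigma, ← Finset.univ_sigma_univ,
      Finset.sum_sigma]
  rcases μ with ⟨μv, hμ⟩
  rcases ν with ⟨νv, hν⟩
  rw [Finset.sum_eq_single j (fun a _ ha => Finset.sum_eq_zero fun s _ => by simp [ha])
        (by simp),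
      Finset.sum_eq_single i (fun a _ ha => Finset.sum_eq_zero fun s _ => by simp [ha])
        (by simp)]
  simp only [if_pos rfl]
  simp only [mul_add, add_mul, Finset.sum_add_distrib, mul_ite, ite_mul, mul_zero, zero_mul,
    mul_one, one_mul]
  simp only [if_true]
  cases νv with
  | zero =>
    cases μv with
    | zero =>
      simp only [Finset.sum_add_distrib, sum_if_val, sum_if_val', if_zero_eq_succ,
        Finset.sum_const_zero, add_zero, Nat.zero_add, Nat.add_zero, Nat.choose_self,
        Nat.choose_zero_right, Nat.cast_one, pow_zero, one_mul, mul_one, hν, hμ, dif_pos,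
        if_true, pow_one]
      field_simp
    | succ μb =>
      have hμ' : μb < nsz i := Nat.lt_of_succ_lt hμ
      simp only [Nat.succ_eq_add_one, add_left_inj, Finset.sum_add_distrib, sum_if_val,
        sum_if_val', if_zero_eq_succ, Finset.sum_const_zero, add_zero, Nat.zero_add,
        Nat.add_zero, Nat.choose_self, Nat.choose_zero_right, Nat.cast_one, pow_zero,
        one_mul, mul_one, hν, hμ, hμ', dif_pos, if_true, pow_one, Nat.succ_ne_zero,
        if_false]
      field_simp
      ring
  | succ νb =>
    have hν' : νb < Nsz j := Nat.lt_of_succ_lt hν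
    cases μv with
    | zero =>
      simp only [Nat.succ_eq_add_one, add_left_inj, Finset.sum_add_distrib, sum_if_val,
        sum_if_val', if_zero_eq_succ, Finset.sum_const_zero, add_zero, Nat.zero_add,
        Nat.add_zero, Nat.choose_self, Nat.choose_zero_right, Nat.cast_one, pow_zero,
        one_mul, mul_one, hν, hν', hμ, dif_pos, if_true, pow_one, Nat.succ_ne_zero,
        if_false]
      field_simp
      ring
    | succ μb =>
      have hμ' : μb < nsz i := Nat.lt_of_succ_lt hμ
      have hP : (μb + 1 + (νb + 1)).choose (νb + 1)
          = (μb + 1 + νb).choose νb + (μb + (νb + 1)).choose (νb + 1) := by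
        rw [show μb + 1 + (νb + 1) = (μb + 1 + νb) + 1 by ring, Nat.choose_succ_succ']
        congr 2
        omega
      simp only [Nat.succ_eq_add_one, add_left_inj, Finset.sum_add_distrib, sum_if_val,
        sum_if_val', if_zero_eq_succ, Finset.sum_const_zero, add_zero, hν, hν', hμ, hμ',
        dif_pos, Nat.succ_ne_zero, if_false, hP, Nat.cast_add]
      field_simp
      ring
end

section
/- Let r be a polynomial with complex coefficients, let β, δ ∈ ℂ with β ≠ δ, and let μ, ν ≥ 1 be integers. Then the (ν−1)-st derivative of the function z ↦ r(z)/(z−δ)^μ, evaluated at z = β and divided by (ν−1)!, equals ∑_{ξ=1}^{ν} [r^{(ν−ξ)}(β)/(ν−ξ)!] · C(μ+ξ−2, ξ−1) · (−1)^{ξ−1} / (β−δ)^{μ+ξ−1}, where r^{(k)} denotes the k-th derivative of the polynomial r. -/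
open Matrix BigOperators

private lemma hasDerivAt_aux (q : Polynomial ℂ) (δ β : ℂ) (h : β ≠ δ) (m : ℕ) :
    HasDerivAt (fun z => q.eval z * ((z - δ) ^ m)⁻¹)
      ((Polynomial.derivative q).eval β * ((β - δ) ^ m)⁻¹
        - (m : ℂ) * q.eval β * ((β - δ) ^ (m + 1))⁻¹) β := by
  have hsub : β - δ ≠ 0 := sub_ne_zero.mpr h
  have hz := hasDerivAt_zpow (-(m : ℤ)) (β - δ) (Or.inl hsub)
  have hsub' : HasDerivAt (fun z : ℂ => z - δ) 1 β := (hasDerivAt_id β).sub_const δ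
  have h2 := hz.comp β hsub'
  have h3 := (q.hasDerivAt β).mul h2
  have hfun : (fun z : ℂ => q.eval z * ((z - δ) ^ m)⁻¹)
      = fun y => Polynomial.eval y q * (((fun x : ℂ => x ^ (-(m : ℤ))) ∘ fun z => z - δ) y) := by
    funext z
    simp only [Function.comp_apply]
    rw [_root_.zpow_neg, zpow_natCast]
  rw [hfun]
  convert h3 using 1
  · rfl
  · rfl
  · rfl
  simp only [Function.comp_apply]
  have e1 : (β - δ) ^ (-(m : ℤ)) = ((β - δ) ^ m)⁻¹ := by
    rw [_root_.zpow_neg, zpow_natCast]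
  have e2 : (β - δ) ^ (-(m : ℤ) - 1) = ((β - δ) ^ (m + 1))⁻¹ := by
    rw [show -(m : ℤ) - 1 = -((m : ℕ) + 1 : ℕ) by push_cast; ring, _root_.zpow_neg,
      zpow_natCast]
  rw [e1, e2]
  push_cast
  ring

private lemma key (r : Polynomial ℂ) (δ : ℂ) (μ : ℕ) (n : ℕ) :
    ∀ β : ℂ, β ≠ δ → iteratedDeriv n (fun z => r.eval z / (z - δ) ^ μ) β
      = ∑ j ∈ Finset.range (n + 1),
          (n.choose j : ℂ) * (-1 : ℂ) ^ j * (μ.ascFactorial j : ℂ)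
            * (Polynomial.derivative^[n - j] r).eval β * ((β - δ) ^ (μ + j))⁻¹ := by
  induction n with
  | zero =>
    intro β hβ
    simp [iteratedDeriv_zero, div_eq_mul_inv]
  | succ n ih =>
    intro β hβ
    have hsub : β - δ ≠ 0 := sub_ne_zero.mpr hβ
    rw [iteratedDeriv_succ]
    set g : ℂ → ℂ := fun z => ∑ j ∈ Finset.range (n + 1),
      ((n.choose j : ℂ) * (-1 : ℂ) ^ j * (μ.ascFactorial j : ℂ))
        * ((Polynomial.derivative^[n - j] r).eval z * ((z - δ) ^ (μ + j))⁻¹) with hg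
    have hev : iteratedDeriv n (fun z => r.eval z / (z - δ) ^ μ) =ᶠ[nhds β] g := by
      filter_upwards [IsOpen.mem_nhds isOpen_ne hβ] with z hz
      rw [ih z hz, hg]
      exact Finset.sum_congr rfl fun j _ => by ring
    rw [hev.deriv_eq]
    have hD : HasDerivAt g (∑ j ∈ Finset.range (n + 1),
        ((n.choose j : ℂ) * (-1 : ℂ) ^ j * (μ.ascFactorial j : ℂ))
          * ((Polynomial.derivative (Polynomial.derivative^[n - j] r)).eval β
              * ((β - δ) ^ (μ + j))⁻¹
            - ((μ + j : ℕ) : ℂ) * (Polynomial.derivative^[n - j] r).eval β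
              * ((β - δ) ^ (μ + j + 1))⁻¹)) β :=
      HasDerivAt.fun_sum fun j _ =>
        (hasDerivAt_aux (Polynomial.derivative^[n - j] r) δ β hβ (μ + j)).const_mul _
    rw [hD.deriv]
    -- now the combinatorial recombination
    set u : ℕ → ℂ := fun j => (-1 : ℂ) ^ j * (μ.ascFactorial j : ℂ)
      * (Polynomial.derivative^[n + 1 - j] r).eval β * ((β - δ) ^ (μ + j))⁻¹ with hu
    have hA : ∀ j ∈ Finset.range (n + 1),
        ((n.choose j : ℂ) * (-1 : ℂ) ^ j * (μ.ascFactorial j : ℂ))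
          * ((Polynomial.derivative (Polynomial.derivative^[n - j] r)).eval β
              * ((β - δ) ^ (μ + j))⁻¹
            - ((μ + j : ℕ) : ℂ) * (Polynomial.derivative^[n - j] r).eval β
              * ((β - δ) ^ (μ + j + 1))⁻¹)
        = (n.choose j : ℂ) * u j + (n.choose j : ℂ) * u (j + 1) := by
      intro j hj
      have hjn : j ≤ n := Nat.lt_succ_iff.mp (Finset.mem_range.mp hj)
      have e1 : Polynomial.derivative (Polynomial.derivative^[n - j] r)
          = Polynomial.derivative^[n + 1 - j] r := by
        rw [← Function.iterate_succ_apply' Polynomial.derivative]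
        congr 1
        omega
      have e2 : n + 1 - (j + 1) = n - j := by omega
      have e3 : μ.ascFactorial (j + 1) = (μ + j) * μ.ascFactorial j :=
        Nat.ascFactorial_succ
      rw [hu]
      simp only [e1, e2, e3]
      push_cast
      rw [show μ + (j + 1) = μ + j + 1 by ring]
      ring
    rw [Finset.sum_congr rfl hA, Finset.sum_add_distrib]
    have target : ∑ j ∈ Finset.range (n + 1 + 1), ((n + 1).choose j : ℂ)
        * (-1 : ℂ) ^ j * (μ.ascFactorial j : ℂ)
        * (Polynomial.derivative^[n + 1 - j] r).eval β * ((β - δ) ^ (μ + j))⁻¹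
        = ∑ j ∈ Finset.range (n + 1 + 1), ((n + 1).choose j : ℂ) * u j :=
      Finset.sum_congr rfl fun j _ => by rw [hu]; ring
    rw [target]
    -- show ∑_{range(n+2)} C(n+1,j) u j = ∑ C(n,j) u j + ∑ C(n,j) u (j+1)
    have pascal : ∑ j ∈ Finset.range (n + 1 + 1), ((n + 1).choose j : ℂ) * u j
        = u 0 + ∑ j ∈ Finset.range (n + 1),
            (((n.choose j : ℂ)) + (n.choose (j + 1) : ℂ)) * u (j + 1) := by
      rw [Finset.sum_range_succ']
      simp only [Nat.choose_zero_right, Nat.cast_one, one_mul]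
      rw [add_comm]
      congr 1
      refine Finset.sum_congr rfl fun j _ => ?_
      rw [Nat.choose_succ_succ]
      push_cast
      ring
    rw [pascal]
    have split : ∑ j ∈ Finset.range (n + 1),
        (((n.choose j : ℂ)) + (n.choose (j + 1) : ℂ)) * u (j + 1)
        = (∑ j ∈ Finset.range (n + 1), (n.choose j : ℂ) * u (j + 1))
          + ∑ j ∈ Finset.range (n + 1), (n.choose (j + 1) : ℂ) * u (j + 1) := by
      rw [← Finset.sum_add_distrib]
      exact Finset.sum_congr rfl fun j _ => by ring
    rw [split]
    have tail : u 0 + ∑ j ∈ Finset.range (n + 1), (n.choose (j + 1) : ℂ) * u (j + 1)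
        = ∑ j ∈ Finset.range (n + 1), (n.choose j : ℂ) * u j := by
      have h1 : ∑ j ∈ Finset.range (n + 1 + 1), (n.choose j : ℂ) * u j
          = (∑ j ∈ Finset.range (n + 1), (n.choose (j + 1) : ℂ) * u (j + 1))
            + (n.choose 0 : ℂ) * u 0 := Finset.sum_range_succ' _ _
      have h2 : ∑ j ∈ Finset.range (n + 1 + 1), (n.choose j : ℂ) * u j
          = (∑ j ∈ Finset.range (n + 1), (n.choose j : ℂ) * u j)
            + (n.choose (n + 1) : ℂ) * u (n + 1) := Finset.sum_range_succ _ _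
      rw [Nat.choose_succ_self] at h2
      simp only [Nat.cast_zero, zero_mul, add_zero] at h2
      rw [Nat.choose_zero_right] at h1
      simp only [Nat.cast_one, one_mul] at h1
      rw [← h2, h1]
      ring
    linear_combination -tail

/-- For a polynomial `r`, `β ≠ δ`, and integers `μ, ν ≥ 1`,
`(1/(ν−1)!)·(d/dz)^{ν−1}|_{z=β} (r(z)/(z−δ)^μ)
  = ∑_{ξ=1}^{ν} [r^{(ν−ξ)}(β)/(ν−ξ)!]·C(μ+ξ−2, ξ−1)·(−1)^{ξ−1}/(β−δ)^{μ+ξ−1}`. -/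
theorem stmt12 (r : Polynomial ℂ) (β δ : ℂ) (hβδ : β ≠ δ)
    (μ ν : ℕ) (hμ : 1 ≤ μ) (hν : 1 ≤ ν) :
    iteratedDeriv (ν - 1) (fun z => r.eval z / (z - δ) ^ μ) β / (Nat.factorial (ν - 1) : ℂ)
      = ∑ ξ ∈ Finset.Icc 1 ν,
          ((Polynomial.derivative^[ν - ξ] r).eval β / (Nat.factorial (ν - ξ) : ℂ))
            * (Nat.choose (μ + ξ - 2) (ξ - 1) : ℂ) * (-1 : ℂ) ^ (ξ - 1)
            / (β - δ) ^ (μ + ξ - 1) := by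
  have hsub : β - δ ≠ 0 := sub_ne_zero.mpr hβδ
  rw [key r δ μ (ν - 1) β hβδ]
  have hν1 : ν - 1 + 1 = ν := Nat.sub_add_cancel hν
  rw [hν1]
  -- reindex RHS
  rw [show Finset.Icc 1 ν = Finset.Ico 1 (ν + 1) from (Finset.Ico_add_one_right_eq_Icc 1 ν).symm,
    Finset.sum_Ico_eq_sum_range]
  rw [show ν + 1 - 1 = ν from rfl]
  rw [Finset.sum_div]
  refine Finset.sum_congr rfl fun j hj => ?_
  have hjν : j ≤ ν - 1 := by
    have := Finset.mem_range.mp hj; omega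
  have e1 : ν - (1 + j) = ν - 1 - j := by omega
  have e2 : 1 + j - 1 = j := by omega
  have e3 : μ + (1 + j) - 2 = μ + j - 1 := by omega
  have e4 : μ + (1 + j) - 1 = μ + j := by omega
  rw [e1, e2, e3, e4]
  -- coefficient identity
  have hnat : (ν - 1).choose j * μ.ascFactorial j * (ν - 1 - j).factorial
      = (μ + j - 1).choose j * (ν - 1).factorial := by
    rw [Nat.ascFactorial_eq_factorial_mul_choose']
    calc (ν - 1).choose j * (j.factorial * (μ + j - 1).choose j) * (ν - 1 - j).factorial
        = ((ν - 1).choose j * j.factorial * (ν - 1 - j).factorial) * (μ + j - 1).choose j := by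
          ring
      _ = (μ + j - 1).choose j * (ν - 1).factorial := by
          rw [Nat.choose_mul_factorial_mul_factorial hjν]; ring
  have hcast : ((ν - 1).choose j : ℂ) * (μ.ascFactorial j : ℂ) * ((ν - 1 - j).factorial : ℂ)
      = ((μ + j - 1).choose j : ℂ) * ((ν - 1).factorial : ℂ) := by
    exact_mod_cast congrArg (Nat.cast : ℕ → ℂ) hnat
  have f1 : ((ν - 1).factorial : ℂ) ≠ 0 := Nat.cast_ne_zero.mpr (Nat.factorial_ne_zero _)
  have f2 : ((ν - 1 - j).factorial : ℂ) ≠ 0 := Nat.cast_ne_zero.mpr (Nat.factorial_ne_zero _)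
  have hpow : (β - δ) ^ (μ + j) ≠ 0 := pow_ne_zero _ hsub
  field_simp
  linear_combination ((Polynomial.derivative^[ν - 1 - j] r).eval β) * hcast
end

section
/- Let B be an N×N complex matrix and D an n×n complex matrix, each of whose eigenvalues all lie in the open unit disk {z ∈ ℂ : |z| < 1}, and let f ∈ ℂⁿ, g ∈ ℂᴺ. Then the contour integral over the positively oriented unit circle of the matrix-valued function z ↦ (z·I_n − Dᵀ)⁻¹·f·gᵀ·(z·I_N − B)⁻¹ vanishes: ∮_{|z|=1} (z·I_n − Dᵀ)⁻¹·f·gᵀ·(z·I_N − B)⁻¹ dz = 0. -/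
set_option maxHeartbeats 1000000
open Matrix BigOperators

attribute [local instance] Matrix.linftyOpNormedRing Matrix.linftyOpNormedAlgebra

section aux

variable {m : Type*} [Fintype m] [DecidableEq m]

-- entry bound for linfty operator norm
lemma entry_norm_le (A : Matrix m m ℂ) (i j : m) : ‖A i j‖ ≤ ‖A‖ := by
  rw [Matrix.linfty_opNorm_def]
  calc ‖A i j‖ ≤ ∑ k, ‖A i k‖ :=
        Finset.single_le_sum (fun k _ => norm_nonneg _) (Finset.mem_univ j)
    _ ≤ _ := by
        have : (∑ k, ‖A i k‖₊ : NNReal) ≤ Finset.univ.sup fun i => ∑ k, ‖A i k‖₊ :=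
          Finset.le_sup (f := fun i => ∑ k, ‖A i k‖₊) (Finset.mem_univ i)
        calc (∑ k, ‖A i k‖) = ((∑ k, ‖A i k‖₊ : NNReal) : ℝ) := by push_cast; rfl
          _ ≤ _ := by exact_mod_cast this

-- resolvent set membership for |z| ≥ 1
lemma mem_resolventSet_of_spec (A : Matrix m m ℂ)
    (hA : ∀ z ∈ spectrum ℂ A, ‖z‖ < 1) {z : ℂ} (hz : 1 ≤ ‖z‖) :
    z ∈ resolventSet ℂ A := by
  by_contra h
  have : z ∈ spectrum ℂ A := h
  have := hA z this
  linarith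

-- resolvent as matrix inverse
lemma resolvent_eq_inv (A : Matrix m m ℂ) (z : ℂ) :
    (z • (1 : Matrix m m ℂ) - A)⁻¹ = resolvent A z := by
  rw [resolvent, Matrix.nonsing_inv_eq_ringInverse, Algebra.algebraMap_eq_smul_one]

-- spectrum of transpose
lemma spec_transpose (A : Matrix m m ℂ) : spectrum ℂ Aᵀ = spectrum ℂ A := by
  ext z
  simp only [spectrum, resolventSet, Set.mem_compl_iff, Set.mem_setOf_eq]
  rw [Matrix.isUnit_iff_isUnit_det, Matrix.isUnit_iff_isUnit_det]
  rw [Algebra.algebraMap_eq_smul_one]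
  congr! 1
  rw [← Matrix.det_transpose (z • (1 : Matrix m m ℂ) - A), Matrix.transpose_sub,
    Matrix.transpose_smul, Matrix.transpose_one]

-- resolvent decay
lemma resolvent_bound (A : Matrix m m ℂ) :
    ∃ C > (0:ℝ), ∃ r : ℝ, ∀ z : ℂ, r ≤ ‖z‖ → ‖resolvent A z‖ ≤ C / ‖z‖ := by
  haveI : CompleteSpace (Matrix m m ℂ) := FiniteDimensional.complete ℂ _
  have hO := spectrum.resolvent_isBigO_inv (𝕜 := ℂ) A
  rw [Asymptotics.isBigO_iff] at hO
  obtain ⟨C, hC⟩ := hO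
  rw [← comap_norm_atTop, Filter.eventually_comap, Filter.eventually_atTop] at hC
  obtain ⟨r, hr⟩ := hC
  refine ⟨max C 1, lt_of_lt_of_le one_pos (le_max_right _ _), r, fun z hz => ?_⟩
  calc ‖resolvent A z‖ ≤ C * ‖z⁻¹‖ := hr ‖z‖ hz z rfl
    _ ≤ max C 1 * ‖z⁻¹‖ := by
        apply mul_le_mul_of_nonneg_right (le_max_left _ _) (norm_nonneg _)
    _ = max C 1 / ‖z‖ := by rw [norm_inv]; ring

end aux

/-- If all eigenvalues of `B` and `D` lie in the open unit disk, then
(entrywise) `∮_{|z|=1} (z·I_n − Dᵀ)⁻¹·f·gᵀ·(z·I_N − B)⁻¹ dz = 0`. -/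
theorem stmt15 (n N : ℕ)
    (B : Matrix (Fin N) (Fin N) ℂ) (D : Matrix (Fin n) (Fin n) ℂ)
    (hB : ∀ z ∈ spectrum ℂ B, ‖z‖ < 1)
    (hD : ∀ z ∈ spectrum ℂ D, ‖z‖ < 1)
    (f : Fin n → ℂ) (g : Fin N → ℂ) :
    ∀ (a : Fin n) (b : Fin N),
      (∮ z in C(0, 1),
        (((z • (1 : Matrix (Fin n) (Fin n) ℂ) - Dᵀ)⁻¹ * Matrix.vecMulVec f g
          * (z • (1 : Matrix (Fin N) (Fin N) ℂ) - B)⁻¹) a b)) = 0 := by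
  intro a b
  haveI : CompleteSpace (Matrix (Fin n) (Fin n) ℂ) := FiniteDimensional.complete ℂ _
  haveI : CompleteSpace (Matrix (Fin N) (Fin N) ℂ) := FiniteDimensional.complete ℂ _
  have hDT : ∀ z ∈ spectrum ℂ Dᵀ, ‖z‖ < 1 := by
    rw [spec_transpose]; exact hD
  set M := Matrix.vecMulVec f g with hM
  set h : ℂ → ℂ := fun z =>
    ((z • (1 : Matrix (Fin n) (Fin n) ℂ) - Dᵀ)⁻¹ * M
      * (z • (1 : Matrix (Fin N) (Fin N) ℂ) - B)⁻¹) a b with hh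
  -- rewrite h via resolvents
  have hres : ∀ z : ℂ, h z = ∑ j, (∑ i, (resolvent Dᵀ z) a i * M i j) * (resolvent B z) j b := by
    intro z
    simp only [hh, ← resolvent_eq_inv, Matrix.mul_apply]
  -- differentiability for ‖z‖ ≥ 1
  have hdiff : ∀ z : ℂ, 1 ≤ ‖z‖ → DifferentiableAt ℂ h z := by
    intro z hz
    have h1 : DifferentiableAt ℂ (resolvent Dᵀ) z :=
      (spectrum.hasDerivAt_resolvent (mem_resolventSet_of_spec Dᵀ hDT hz)).differentiableAt
    have h2 : DifferentiableAt ℂ (resolvent B) z :=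
      (spectrum.hasDerivAt_resolvent (mem_resolventSet_of_spec B hB hz)).differentiableAt
    have : DifferentiableAt ℂ
        (fun z => ∑ j, (∑ i, (resolvent Dᵀ z) a i * M i j) * (resolvent B z) j b) z := by
      apply DifferentiableAt.fun_sum
      intro j _
      apply DifferentiableAt.mul
      · apply DifferentiableAt.fun_sum
        intro i _
        exact (((Matrix.entryLinearMap ℂ ℂ a i).toContinuousLinearMap.differentiableAt).comp z
          h1).mul_const _
      · exact ((Matrix.entryLinearMap ℂ ℂ j b).toContinuousLinearMap.differentiableAt).comp z h2
    exact this.congr_of_eventuallyEq (Filter.Eventually.of_forall fun w => (hres w))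
  obtain ⟨C₁, hC₁pos, r₁, hr₁⟩ := resolvent_bound Dᵀ
  obtain ⟨C₂, hC₂pos, r₂, hr₂⟩ := resolvent_bound B
  set K : ℝ := (∑ j, ∑ i, ‖M i j‖) + 1 with hK
  have hKpos : 0 < K := by positivity
  set R₀ : ℝ := max 1 (max r₁ r₂) with hR₀
  have hR₀1 : (1:ℝ) ≤ R₀ := le_max_left _ _
  have key : ∀ R : ℝ, R₀ ≤ R → ‖∮ z in C(0, 1), h z‖ ≤ 2 * Real.pi * K * C₁ * C₂ / R := by
    intro R hR
    have h1R : (1:ℝ) ≤ R := le_trans hR₀1 hR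
    have hRpos : (0:ℝ) < R := lt_of_lt_of_le one_pos h1R
    -- change radius
    have heq : (∮ z in C(0, R), h z) = ∮ z in C(0, 1), h z := by
      apply Complex.circleIntegral_eq_of_differentiable_on_annulus_off_countable one_pos h1R
        Set.countable_empty
      · intro z hz
        have : 1 ≤ ‖z‖ := by
          have := hz.2
          rw [Metric.mem_ball, Complex.dist_eq, sub_zero] at this
          simpa using not_lt.mp this
        exact (hdiff z this).continuousAt.continuousWithinAt
      · intro z hz
        have : 1 ≤ ‖z‖ := by
          have := hz.1.2
          rw [Metric.mem_closedBall, Complex.dist_eq, sub_zero] at this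
          have := not_le.mp this
          simpa using this.le
        exact hdiff z this
    rw [← heq]
    -- bound on the sphere of radius R
    have hb : ∀ z ∈ Metric.sphere (0:ℂ) R, ‖h z‖ ≤ K * C₁ * C₂ / R ^ 2 := by
      intro z hz
      have hzn : ‖z‖ = R := by
        rw [Metric.mem_sphere, Complex.dist_eq, sub_zero] at hz; simpa using hz
      have hP : ∀ i, ‖(resolvent Dᵀ z) a i‖ ≤ C₁ / R := by
        intro i
        refine (entry_norm_le _ _ _).trans ?_
        rw [← hzn]
        exact hr₁ z (by rw [hzn]; exact le_trans (le_trans (le_max_left r₁ r₂) (le_max_right 1 _)) hR)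
      have hQ : ∀ j, ‖(resolvent B z) j b‖ ≤ C₂ / R := by
        intro j
        refine (entry_norm_le _ _ _).trans ?_
        rw [← hzn]
        exact hr₂ z (by rw [hzn]; exact le_trans (le_trans (le_max_right r₁ r₂) (le_max_right 1 _)) hR)
      rw [hres]
      calc ‖∑ j, (∑ i, (resolvent Dᵀ z) a i * M i j) * (resolvent B z) j b‖
          ≤ ∑ j, ‖(∑ i, (resolvent Dᵀ z) a i * M i j) * (resolvent B z) j b‖ :=
            norm_sum_le _ _
        _ ≤ ∑ j, (∑ i, ‖M i j‖ * (C₁ / R)) * (C₂ / R) := by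
            apply Finset.sum_le_sum; intro j _
            rw [norm_mul]
            apply mul_le_mul ?_ (hQ j) (norm_nonneg _) ?_
            · calc ‖∑ i, (resolvent Dᵀ z) a i * M i j‖
                  ≤ ∑ i, ‖(resolvent Dᵀ z) a i * M i j‖ := norm_sum_le _ _
                _ ≤ ∑ i, ‖M i j‖ * (C₁ / R) := by
                    apply Finset.sum_le_sum; intro i _
                    rw [norm_mul, mul_comm]
                    exact mul_le_mul_of_nonneg_left (hP i) (norm_nonneg _)
            · positivity
        _ ≤ K * C₁ * C₂ / R ^ 2 := by
            rw [show K * C₁ * C₂ / R ^ 2 = K * (C₁ / R) * (C₂ / R) by field_simp]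
            simp_rw [← Finset.sum_mul]
            apply mul_le_mul_of_nonneg_right ?_ (by positivity)
            apply mul_le_mul_of_nonneg_right ?_ (by positivity)
            rw [hK]
            linarith
    calc ‖∮ z in C(0, R), h z‖ ≤ 2 * Real.pi * R * (K * C₁ * C₂ / R ^ 2) :=
          circleIntegral.norm_integral_le_of_norm_le_const hRpos.le hb
      _ = 2 * Real.pi * K * C₁ * C₂ / R := by field_simp
  have hlim : Filter.Tendsto (fun R : ℝ => 2 * Real.pi * K * C₁ * C₂ / R)
      Filter.atTop (nhds 0) :=
    Filter.Tendsto.div_atTop tendsto_const_nhds Filter.tendsto_id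
  have hI : ‖∮ z in C(0, 1), h z‖ ≤ 0 :=
    ge_of_tendsto hlim (Filter.eventually_atTop.mpr ⟨R₀, key⟩)
  have : (∮ z in C(0, 1), h z) = 0 := norm_le_zero_iff.mp hI
  exact this
end

section
/- Let A be an n×N complex matrix, B an N×N complex matrix and D an n×n complex matrix, with all eigenvalues of B and D in the open unit disk, and let f ∈ ℂⁿ, g ∈ ℂᴺ satisfy A·B − Dᵀ·A = f·gᵀ. Then for every K ∈ ℕ and t₁,…,t_K ∈ ℂ, (1/(2πi)) · ∮_{|z|=1} (z·I_n − Dᵀ)⁻¹·f·gᵀ·(z·I_N − B)⁻¹ · exp(∑_{i=1}^K t_i zⁱ) dz = A·exp(∑_{i=1}^K t_i Bⁱ) − exp(∑_{i=1}^K t_i (Dᵀ)ⁱ)·A. -/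
open Matrix BigOperators


namespace Stmt16

open NormedSpace Metric Set Filter

attribute [local instance] Matrix.linftyOpNormedRing Matrix.linftyOpNormedAlgebra

variable {m : ℕ}

abbrev Mat (m : ℕ) := Matrix (Fin m) (Fin m) ℂ



lemma isUnit_res (M : Mat m) (hM : ∀ z ∈ spectrum ℂ M, ‖z‖ < 1)
    {z : ℂ} (hz : z ∈ sphere (0:ℂ) 1) : IsUnit (z • (1 : Mat m) - M) := by
  have hz1 : ‖z‖ = 1 := by simpa using hz
  have hns : z ∉ spectrum ℂ M := fun hmem => by
    have := hM z hmem; rw [hz1] at this; exact lt_irrefl 1 this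
  have := spectrum.notMem_iff.mp hns
  rwa [Algebra.algebraMap_eq_smul_one] at this

lemma mul_inv_res {X : Mat m} (hX : IsUnit X) : X * X⁻¹ = 1 :=
  Matrix.mul_nonsing_inv _ ((Matrix.isUnit_iff_isUnit_det _).mp hX)

lemma inv_mul_res {X : Mat m} (hX : IsUnit X) : X⁻¹ * X = 1 :=
  Matrix.nonsing_inv_mul _ ((Matrix.isUnit_iff_isUnit_det _).mp hX)

lemma continuousOn_res (M : Mat m) (hM : ∀ z ∈ spectrum ℂ M, ‖z‖ < 1) :
    ContinuousOn (fun z : ℂ => (z • (1 : Mat m) - M)⁻¹) (sphere (0:ℂ) 1) := by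
  intro z hz
  apply ContinuousAt.continuousWithinAt
  have h1 : ContinuousAt (fun z : ℂ => z • (1 : Mat m) - M) z :=
    ((continuous_id.smul continuous_const).sub continuous_const).continuousAt
  refine ContinuousAt.comp ?_ h1
  apply continuousAt_matrix_inv
  exact NormedRing.inverse_continuousAt ((Matrix.isUnit_iff_isUnit_det _).mp (isUnit_res M hM hz)).unit

lemma specRad_lt (M : Mat m) (hM : ∀ z ∈ spectrum ℂ M, ‖z‖ < 1) :
    spectralRadius ℂ M < 1 := by
  rcases (spectrum ℂ M).eq_empty_or_nonempty with h | h
  · simp [spectralRadius, h]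
  · refine spectrum.spectralRadius_lt_of_forall_lt_of_nonempty h (r := 1) ?_
    intro k hk
    have := hM k hk
    simpa [← NNReal.coe_lt_coe, nnnorm] using this

lemma pow_tendsto_aux (M : Mat m) (h1 : spectralRadius ℂ M < 1) :
    Tendsto (fun k : ℕ => ‖M ^ k‖) atTop (nhds 0) := by
  obtain ⟨r, hr1, hr2⟩ := ENNReal.lt_iff_exists_nnreal_btwn.mp h1
  have hgel := spectrum.pow_nnnorm_pow_one_div_tendsto_nhds_spectralRadius M
  have hev : ∀ᶠ k : ℕ in atTop, (‖M ^ k‖₊ : ENNReal) ^ (1 / (k:ℝ)) < r :=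
    hgel.eventually_lt_const hr1
  have hr01 : (r : ℝ) < 1 := by exact_mod_cast hr2
  have hbound : ∀ᶠ k : ℕ in atTop, ‖M ^ k‖ ≤ (r : ℝ) ^ k := by
    filter_upwards [hev, eventually_ge_atTop 1] with k hk hk1
    have hk0 : (k : ℝ) ≠ 0 := by positivity
    have := ENNReal.rpow_le_rpow hk.le (by positivity : (0:ℝ) ≤ (k:ℝ))
    rw [← ENNReal.rpow_mul, one_div, inv_mul_cancel₀ hk0, ENNReal.rpow_one,
      ENNReal.rpow_natCast] at this
    have h2 : ‖M ^ k‖₊ ≤ r ^ k := by exact_mod_cast this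
    calc ‖M ^ k‖ = ((‖M ^ k‖₊ : NNReal) : ℝ) := rfl
      _ ≤ ((r ^ k : NNReal) : ℝ) := by exact_mod_cast h2
      _ = (r : ℝ) ^ k := by push_cast; ring
  have hto : Tendsto (fun k : ℕ => (r:ℝ) ^ k) atTop (nhds 0) :=
    tendsto_pow_atTop_nhds_zero_of_lt_one r.coe_nonneg hr01
  exact squeeze_zero' (by filter_upwards with k using norm_nonneg _) hbound hto

lemma pow_tendsto (M : Mat m) (hM : ∀ z ∈ spectrum ℂ M, ‖z‖ < 1) :
    Tendsto (fun k : ℕ => ‖M ^ k‖) atTop (nhds 0) :=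
  pow_tendsto_aux M (specRad_lt M hM)


noncomputable def emb (x : Mat m) : Matrix (Fin m ⊕ Fin m) (Fin m ⊕ Fin m) ℂ :=
  fromBlocks x 1 0 0

noncomputable def Gfun (x : Mat m) : Mat m := (exp (emb x)).toBlocks₁₂

lemma emb_pow (x : Mat m) (n : ℕ) : (emb x) ^ (n + 1) = fromBlocks (x ^ (n+1)) (x ^ n) 0 0 := by
  induction n with
  | zero => simp [emb]
  | succ n ih =>
    rw [pow_succ, ih, emb, fromBlocks_multiply]
    simp [← pow_succ]

noncomputable def toB12 : Matrix (Fin m ⊕ Fin m) (Fin m ⊕ Fin m) ℂ →L[ℂ] Mat m :=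
  LinearMap.toContinuousLinearMap
    { toFun := fun X => X.toBlocks₁₂
      map_add' := fun _ _ => rfl
      map_smul' := fun _ _ => rfl }

lemma toB12_apply (X : Matrix (Fin m ⊕ Fin m) (Fin m ⊕ Fin m) ℂ) :
    toB12 X = X.toBlocks₁₂ := rfl

lemma Gfun_eq (x : Mat m) : Gfun x = ∑' n : ℕ, ((((n:ℕ)+1).factorial : ℂ))⁻¹ • x ^ n := by
  have hs := expSeries_summable' (𝕂 := ℂ) (emb x)
  have : Gfun x = toB12 (exp (emb x)) := rfl
  rw [this, exp_eq_tsum ℂ, toB12.map_tsum hs]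
  have h0 : (toB12 (((Nat.factorial 0 : ℂ))⁻¹ • (emb x) ^ 0) : Mat m) = 0 := by
    simp only [pow_zero, Nat.factorial_zero, Nat.cast_one, inv_one, one_smul]
    show toBlocks₁₂ (1 : Matrix (Fin m ⊕ Fin m) (Fin m ⊕ Fin m) ℂ) = 0
    rw [← fromBlocks_one, toBlocks_fromBlocks₁₂]
  have hs2 : Summable (fun z : ℕ => toB12 (((z.factorial : ℂ))⁻¹ • (emb x) ^ z)) :=
    hs.map toB12 toB12.continuous
  rw [Summable.tsum_eq_zero_add hs2, h0, zero_add]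
  congr 1; funext n
  rw [toB12.map_smul, show toB12 ((emb x) ^ (n+1)) = x ^ n by
    rw [emb_pow, toB12_apply]; exact toBlocks_fromBlocks₁₂ _ _ _ _]

lemma summable_G (x : Mat m) : Summable (fun n : ℕ => ((((n:ℕ)+1).factorial : ℂ))⁻¹ • x ^ n) := by
  have hs := norm_expSeries_summable' (𝕂 := ℂ) x
  refine Summable.of_norm_bounded hs ?_
  intro n
  rw [norm_smul, norm_smul]
  gcongr
  simp only [norm_inv, Complex.norm_natCast]
  have h1 : (0:ℝ) < n.factorial := by exact_mod_cast Nat.factorial_pos n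
  have h2 : (n.factorial : ℝ) ≤ ((n+1).factorial : ℝ) := by exact_mod_cast Nat.factorial_le (Nat.le_succ n)
  exact inv_anti₀ h1 h2

lemma mul_Gfun (x : Mat m) : x * Gfun x = exp x - 1 := by
  rw [Gfun_eq]
  have hmul : x * (∑' n : ℕ, ((((n:ℕ)+1).factorial : ℂ))⁻¹ • x ^ n)
      = ∑' n : ℕ, ((((n:ℕ)+1).factorial : ℂ))⁻¹ • x ^ (n+1) := by
    rw [← (summable_G x).tsum_mul_left x]
    congr 1; funext n
    simp [Matrix.mul_smul, mul_smul_comm, pow_succ']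
  have hexp : exp x = ∑' n : ℕ, ((n.factorial : ℂ))⁻¹ • x ^ n := by
    rw [exp_eq_tsum ℂ]
  rw [hmul, hexp]
  erw [Summable.tsum_eq_zero_add (expSeries_summable' (𝕂 := ℂ) x)]
  simp [add_sub_cancel_left]
  rfl

lemma differentiable_Gfun {u : ℂ → Mat m} (hu : Differentiable ℂ u) :
    Differentiable ℂ (fun z => Gfun (u z)) := by
  have hfb : Differentiable ℂ (fun z => emb (u z)) := by
    have : (fun z => emb (u z))
        = fun z => (fromBlocks (u z) 0 0 0 + fromBlocks 0 1 0 0 :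
            Matrix (Fin m ⊕ Fin m) (Fin m ⊕ Fin m) ℂ) := by
      funext z; rw [emb, fromBlocks_add]; simp
    rw [this]
    refine Differentiable.add ?_ (differentiable_const _)
    let L : Mat m →L[ℂ] Matrix (Fin m ⊕ Fin m) (Fin m ⊕ Fin m) ℂ :=
      LinearMap.toContinuousLinearMap
        { toFun := fun X => fromBlocks X 0 0 0
          map_add' := fun X Y => by rw [fromBlocks_add]; simp
          map_smul' := fun c X => by simp [fromBlocks_smul] }
    have hL : (fun z => (fromBlocks (u z) 0 0 0 :
        Matrix (Fin m ⊕ Fin m) (Fin m ⊕ Fin m) ℂ)) = fun z => L (u z) := rfl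
    rw [hL]
    exact L.differentiable.comp hu
  intro z
  have h1 : DifferentiableAt ℂ (exp : Matrix (Fin m ⊕ Fin m) (Fin m ⊕ Fin m) ℂ → _)
      (emb (u z)) := (exp_analytic (𝕂 := ℂ) _).differentiableAt
  exact (toB12.differentiable.differentiableAt).comp z (h1.comp z (hfb z))


lemma norm_of_sphere {z : ℂ} (hz : z ∈ sphere (0:ℂ) 1) : ‖z‖ = 1 :=
  mem_sphere_zero_iff_norm.mp hz

lemma ne_zero_of_sphere {z : ℂ} (hz : z ∈ sphere (0:ℂ) 1) : z ≠ 0 := by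
  intro h; rw [h] at hz; simp at hz

lemma circleIntegral_add {E : Type*} [NormedAddCommGroup E] [NormedSpace ℂ E]
    {f g : ℂ → E} {c : ℂ} {R : ℝ} (hf : CircleIntegrable f c R)
    (hg : CircleIntegrable g c R) :
    (∮ z in C(c, R), (f z + g z)) = (∮ z in C(c, R), f z) + ∮ z in C(c, R), g z := by
  simp only [circleIntegral, smul_add, intervalIntegral.integral_add hf.out hg.out]

lemma circleIntegral_CLM {E F : Type*} [NormedAddCommGroup E] [NormedSpace ℂ E]
    [CompleteSpace E] [NormedAddCommGroup F] [NormedSpace ℂ F] [CompleteSpace F]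
    (L : E →L[ℂ] F) {f : ℂ → E} {c : ℂ} {R : ℝ} (hf : CircleIntegrable f c R) :
    (∮ z in C(c, R), L (f z)) = L (∮ z in C(c, R), f z) := by
  simp only [circleIntegral]
  rw [← L.intervalIntegral_comp_comm hf.out]
  congr 1
  funext θ
  rw [L.map_smul]

lemma res_step (M : Mat m) (hM : ∀ z ∈ spectrum ℂ M, ‖z‖ < 1)
    {z : ℂ} (hz : z ∈ sphere (0:ℂ) 1) :
    (z • (1 : Mat m) - M)⁻¹
      = z⁻¹ • (1 : Mat m) + z⁻¹ • ((z • (1 : Mat m) - M)⁻¹ * M) := by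
  have hz0 := ne_zero_of_sphere hz
  have hone : z⁻¹ • (z • (1:Mat m) - M) + z⁻¹ • M = 1 := by
    rw [smul_sub, smul_smul, inv_mul_cancel₀ hz0, one_smul, sub_add_cancel]
  calc (z • (1 : Mat m) - M)⁻¹ = (z • (1 : Mat m) - M)⁻¹ * 1 := (mul_one _).symm
    _ = (z • (1 : Mat m) - M)⁻¹ * (z⁻¹ • (z • (1:Mat m) - M) + z⁻¹ • M) := by rw [hone]
    _ = z⁻¹ • ((z • (1 : Mat m) - M)⁻¹ * (z • (1:Mat m) - M))
        + z⁻¹ • ((z • (1 : Mat m) - M)⁻¹ * M) := by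
        rw [mul_add, mul_smul_comm, mul_smul_comm]
    _ = z⁻¹ • (1 : Mat m) + z⁻¹ • ((z • (1 : Mat m) - M)⁻¹ * M) := by
        rw [inv_mul_res (isUnit_res M hM hz)]

lemma integrable_res_pow (M : Mat m) (hM : ∀ z ∈ spectrum ℂ M, ‖z‖ < 1)
    (n : ℤ) (k : ℕ) :
    CircleIntegrable (fun z : ℂ => (z : ℂ) ^ n • ((z • (1 : Mat m) - M)⁻¹ * M ^ k)) 0 1 := by
  refine ContinuousOn.circleIntegrable zero_le_one ?_
  exact ContinuousOn.smul
    (fun z hz => (continuousAt_zpow₀ _ _ (Or.inl (ne_zero_of_sphere hz))).continuousWithinAt)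
    ((continuousOn_res M hM).mul continuousOn_const)

lemma integrable_zpow_smul_const (X : Mat m) (n : ℤ) :
    CircleIntegrable (fun z : ℂ => (z : ℂ) ^ n • X) 0 1 := by
  refine ContinuousOn.circleIntegrable zero_le_one ?_
  exact ContinuousOn.smul
    (fun z hz => (continuousAt_zpow₀ _ _ (Or.inl (ne_zero_of_sphere hz))).continuousWithinAt)
    continuousOn_const

noncomputable def remI (M : Mat m) (k : ℕ) : Mat m :=
  ∮ z in C(0,1), (z:ℂ) ^ (-(k:ℤ)) • ((z • (1 : Mat m) - M)⁻¹ * M ^ k)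

lemma remI_rec (M : Mat m) (hM : ∀ z ∈ spectrum ℂ M, ‖z‖ < 1) (k : ℕ) :
    remI M k = (∮ z in C(0,1), (z:ℂ) ^ (-(k:ℤ) - 1)) • M ^ k + remI M (k+1) := by
  have hint : ∀ z ∈ sphere (0:ℂ) 1,
      (z : ℂ) ^ (-(k:ℤ)) • ((z • (1 : Mat m) - M)⁻¹ * M ^ k)
        = (z:ℂ) ^ (-(k:ℤ) - 1) • M ^ k
          + (z:ℂ) ^ (-(k:ℤ) - 1) • ((z • (1 : Mat m) - M)⁻¹ * M ^ (k + 1)) := by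
    intro z hz
    have hz0 := ne_zero_of_sphere hz
    conv_lhs => rw [res_step M hM hz]
    rw [add_mul, smul_mul_assoc, smul_mul_assoc, one_mul, smul_add, smul_smul, smul_smul,
      mul_assoc, ← pow_succ']
    rw [← _root_.zpow_neg_one (z:ℂ), ← zpow_add₀ hz0]
    norm_num [sub_eq_add_neg]
  have h1 := integrable_zpow_smul_const (M ^ k) (-(k:ℤ) - 1)
  have h2 := integrable_res_pow M hM (-(k:ℤ) - 1) (k+1)
  have hexp : (fun z : ℂ => (z:ℂ) ^ (-((k+1:ℕ)):ℤ) • ((z • (1 : Mat m) - M)⁻¹ * M ^ (k+1)))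
      = fun z : ℂ => (z:ℂ) ^ (-(k:ℤ) - 1) • ((z • (1 : Mat m) - M)⁻¹ * M ^ (k+1)) := by
    funext z; congr 2; push_cast; ring
  rw [remI, remI, hexp,
    circleIntegral.integral_congr zero_le_one (fun z hz => hint z hz),
    circleIntegral_add h1 h2, circleIntegral.integral_smul_const]

lemma zpow_int_zero : ∀ j : ℤ, j ≠ -1 → (∮ z in C(0,1), (z:ℂ) ^ j) = 0 := by
  intro j hj
  have := circleIntegral.integral_sub_zpow_of_ne hj 0 0 1
  simpa using this

lemma zpow_int_neg_one : (∮ z in C(0,1), (z:ℂ) ^ (-1:ℤ)) = 2 * Real.pi * Complex.I := by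
  have h := circleIntegral.integral_sub_inv_of_mem_ball
    (c := (0:ℂ)) (w := 0) (R := 1) (by simp)
  have h2 : (fun z : ℂ => (z:ℂ) ^ (-1:ℤ)) = fun z : ℂ => (z - 0)⁻¹ := by
    funext z; rw [_root_.zpow_neg_one, sub_zero]
  rw [h2, h]

lemma remI_zero_eq (M : Mat m) (hM : ∀ z ∈ spectrum ℂ M, ‖z‖ < 1) (k : ℕ) :
    remI M 0 = (2 * Real.pi * Complex.I) • (1 : Mat m) + remI M (k+1) := by
  induction k with
  | zero =>
    rw [remI_rec M hM 0]
    congr 1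
    have h0 : (fun z : ℂ => (z:ℂ) ^ (-((0:ℕ):ℤ) - 1)) = fun z : ℂ => (z:ℂ) ^ (-1:ℤ) := by
      funext z; norm_num
    rw [h0, zpow_int_neg_one, pow_zero]
  | succ k ih =>
    rw [ih, remI_rec M hM (k+1), zpow_int_zero (-((k+1:ℕ):ℤ) - 1) (by omega), zero_smul,
      zero_add]

lemma res_int (M : Mat m) (hM : ∀ z ∈ spectrum ℂ M, ‖z‖ < 1) :
    (∮ z in C(0, 1), (z • (1 : Mat m) - M)⁻¹)
      = (2 * Real.pi * Complex.I) • (1 : Mat m) := by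
  obtain ⟨C, hC⟩ := (isCompact_sphere (0:ℂ) 1).exists_bound_of_continuousOn
    (continuousOn_res M hM)
  have hC0 : 0 ≤ C := le_trans (norm_nonneg _) (hC 1 (by simp))
  have hnorm : ∀ k : ℕ,
      ‖remI M 0 - (2 * Real.pi * Complex.I) • (1 : Mat m)‖
        ≤ 2 * Real.pi * 1 * (C * ‖M ^ (k+1)‖) := by
    intro k
    rw [remI_zero_eq M hM k, add_sub_cancel_left]
    refine circleIntegral.norm_integral_le_of_norm_le_const zero_le_one ?_
    intro z hz
    rw [norm_smul, norm_zpow, norm_of_sphere hz, _root_.one_zpow, one_mul]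
    exact le_trans (norm_mul_le _ _)
      (mul_le_mul_of_nonneg_right (hC z hz) (norm_nonneg _))
  have htend : Tendsto (fun k : ℕ => 2 * Real.pi * 1 * (C * ‖M ^ (k+1)‖)) atTop (nhds 0) := by
    have h1 : Tendsto (fun k : ℕ => ‖M ^ (k+1)‖) atTop (nhds 0) :=
      (pow_tendsto M hM).comp (tendsto_add_atTop_nat 1)
    have := ((h1.const_mul C).const_mul (2 * Real.pi * 1))
    simpa using this
  have hle : ‖remI M 0 - (2 * Real.pi * Complex.I) • (1 : Mat m)‖ ≤ 0 :=
    ge_of_tendsto' htend hnorm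
  have heq : remI M 0 = (2 * Real.pi * Complex.I) • (1 : Mat m) := by
    have := le_antisymm hle (norm_nonneg _)
    rwa [norm_eq_zero, sub_eq_zero] at this
  have hzero : remI M 0 = ∮ z in C(0, 1), (z • (1 : Mat m) - M)⁻¹ := by
    rw [remI]
    apply circleIntegral.integral_congr zero_le_one
    intro z hz
    simp
  rw [← hzero, heq]


noncomputable def qpoly (M : Mat m) (K : ℕ) (t : Fin K → ℂ) (z : ℂ) : Mat m :=
  ∑ i : Fin K, t i • (∑ j ∈ Finset.range ((i:ℕ)+1), z ^ j • M ^ ((i:ℕ) - j))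

lemma inner_identity (M : Mat m) (z : ℂ) (i : ℕ) :
    (z • (1 : Mat m) - M) * (∑ j ∈ Finset.range (i+1), z ^ j • M ^ (i - j))
      = z ^ (i+1) • (1 : Mat m) - M ^ (i+1) := by
  induction i with
  | zero => simp [sub_mul, smul_mul_assoc]
  | succ i ih =>
    have hS : (∑ j ∈ Finset.range (i+2), z ^ j • M ^ (i+1 - j))
        = (∑ j ∈ Finset.range (i+1), z ^ j • M ^ (i - j)) * M + z ^ (i+1) • (1 : Mat m) := by
      rw [Finset.sum_range_succ, Finset.sum_mul]
      congr 1
      · refine Finset.sum_congr rfl ?_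
        intro j hj
        have hj' : j ≤ i := by
          have := Finset.mem_range.mp hj; omega
        rw [smul_mul_assoc, ← pow_succ]
        congr 2
        omega
      · norm_num
    rw [hS, mul_add, ← mul_assoc, ih, mul_smul_comm, mul_one, smul_sub, smul_smul,
      sub_mul, smul_mul_assoc, one_mul]
    have h1 : z ^ (i+1) * z = z ^ (i+2) := by ring
    have h2 : M ^ (i+1) * M = M ^ (i+2) := by rw [← pow_succ]
    rw [h1, h2]
    abel

lemma q_identity (M : Mat m) (K : ℕ) (t : Fin K → ℂ) (z : ℂ) :
    (z • (1 : Mat m) - M) * qpoly M K t z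
      = (∑ i : Fin K, t i * z ^ ((i:ℕ)+1)) • (1 : Mat m)
        - ∑ i : Fin K, t i • M ^ ((i:ℕ)+1) := by
  rw [qpoly, Finset.mul_sum]
  have : ∀ i : Fin K,
      (z • (1 : Mat m) - M) * (t i • ∑ j ∈ Finset.range ((i:ℕ)+1), z ^ j • M ^ ((i:ℕ) - j))
        = t i • (z ^ ((i:ℕ)+1) • (1 : Mat m)) - t i • M ^ ((i:ℕ)+1) := by
    intro i
    rw [mul_smul_comm, inner_identity, smul_sub]
  rw [Finset.sum_congr rfl (fun i _ => this i), Finset.sum_sub_distrib]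
  congr 1
  rw [Finset.sum_smul]
  exact Finset.sum_congr rfl fun i _ => smul_smul _ _ _

lemma exp_smul_one (c : ℂ) :
    Complex.exp c • (1 : Mat m) = exp (c • (1 : Mat m)) := by
  calc Complex.exp c • (1 : Mat m) = algebraMap ℂ (Mat m) (Complex.exp c) :=
        (Algebra.algebraMap_eq_smul_one _).symm
    _ = algebraMap ℂ (Mat m) (exp c) := by rw [Complex.exp_eq_exp_ℂ]
    _ = exp (algebraMap ℂ (Mat m) c) := algebraMap_exp_comm c
    _ = exp (c • (1 : Mat m)) := by rw [Algebra.algebraMap_eq_smul_one]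

noncomputable def mulRightCLM (X : Mat m) : Mat m →L[ℂ] Mat m :=
  LinearMap.toContinuousLinearMap (LinearMap.mulRight ℂ X)

lemma key (M : Mat m) (hM : ∀ z ∈ spectrum ℂ M, ‖z‖ < 1) (K : ℕ) (t : Fin K → ℂ) :
    (∮ z in C(0,1), Complex.exp (∑ i : Fin K, t i * z ^ ((i:ℕ)+1)) • (z • (1 : Mat m) - M)⁻¹)
      = (2 * Real.pi * Complex.I) • exp (∑ i : Fin K, t i • M ^ ((i:ℕ)+1)) := by
  set pM : Mat m := ∑ i : Fin K, t i • M ^ ((i:ℕ)+1) with hpM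
  set p : ℂ → ℂ := fun z => ∑ i : Fin K, t i * z ^ ((i:ℕ)+1) with hp
  have hqdiff : Differentiable ℂ (qpoly M K t) := by
    apply Differentiable.fun_sum
    intro i _
    refine Differentiable.fun_const_smul ?_ _
    apply Differentiable.fun_sum
    intro j _
    exact (differentiable_pow j).smul_const _
  have hΔdiff : Differentiable ℂ (fun z => p z • (1 : Mat m) - pM) := by
    apply Differentiable.sub_const
    apply Differentiable.smul_const
    apply Differentiable.fun_sum
    intro i _
    exact (differentiable_pow _).const_mul _
  have hFdiff : Differentiable ℂ
      (fun z => qpoly M K t z * Gfun (p z • (1 : Mat m) - pM) * exp pM) :=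
    ((hqdiff.mul (differentiable_Gfun hΔdiff))).mul_const _
  have hsphere : ∀ z ∈ sphere (0:ℂ) 1,
      Complex.exp (p z) • (z • (1 : Mat m) - M)⁻¹
        = (z • (1 : Mat m) - M)⁻¹ * exp pM
          + qpoly M K t z * Gfun (p z • (1 : Mat m) - pM) * exp pM := by
    intro z hz
    have hΔ : (p z • (1 : Mat m) - pM) = (z • (1 : Mat m) - M) * qpoly M K t z :=
      (q_identity M K t z).symm
    have hcomm : Commute (p z • (1 : Mat m) - pM) pM :=
      ((Commute.one_left pM).smul_left _).sub_left (Commute.refl pM)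
    have hexpΔ : exp (p z • (1 : Mat m) - pM) = 1 + (p z • (1 : Mat m) - pM) *
        Gfun (p z • (1 : Mat m) - pM) := by
      rw [mul_Gfun, add_sub_cancel]
    calc Complex.exp (p z) • (z • (1 : Mat m) - M)⁻¹
        = (z • (1 : Mat m) - M)⁻¹ * (Complex.exp (p z) • (1 : Mat m)) := by
          rw [mul_smul_comm, mul_one]
      _ = (z • (1 : Mat m) - M)⁻¹ * exp ((p z • (1 : Mat m) - pM) + pM) := by
          rw [exp_smul_one, sub_add_cancel]
      _ = (z • (1 : Mat m) - M)⁻¹ * ((1 + (p z • (1 : Mat m) - pM) *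
            Gfun (p z • (1 : Mat m) - pM)) * exp pM) := by
          erw [exp_add_of_commute hcomm]; erw [hexpΔ]; rfl
      _ = (z • (1 : Mat m) - M)⁻¹ * exp pM
          + qpoly M K t z * Gfun (p z • (1 : Mat m) - pM) * exp pM := by
          rw [hΔ]
          have h1 : (z • (1 : Mat m) - M)⁻¹ * (z • (1 : Mat m) - M) = 1 :=
            inv_mul_res (isUnit_res M hM hz)
          have h2 : (z • (1 : Mat m) - M)⁻¹ * ((1 + (z • (1 : Mat m) - M) * qpoly M K t z *
              Gfun ((z • (1 : Mat m) - M) * qpoly M K t z)) * exp pM)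
              = (z • (1 : Mat m) - M)⁻¹ * exp pM
                + ((z • (1 : Mat m) - M)⁻¹ * (z • (1 : Mat m) - M)) * (qpoly M K t z *
                  Gfun ((z • (1 : Mat m) - M) * qpoly M K t z) * exp pM) := by
            noncomm_ring
          rw [h2, h1, one_mul]
  have hint1 : CircleIntegrable (fun z : ℂ => (z • (1 : Mat m) - M)⁻¹ * exp pM) 0 1 :=
    ContinuousOn.circleIntegrable zero_le_one
      ((continuousOn_res M hM).mul continuousOn_const)
  have hint2 : CircleIntegrable
      (fun z : ℂ => qpoly M K t z * Gfun (p z • (1 : Mat m) - pM) * exp pM) 0 1 :=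
    ContinuousOn.circleIntegrable zero_le_one hFdiff.continuous.continuousOn
  rw [circleIntegral.integral_congr zero_le_one (fun z hz => hsphere z hz),
    circleIntegral_add hint1 hint2]
  have hzero : (∮ z in C(0,1), qpoly M K t z * Gfun (p z • (1 : Mat m) - pM) * exp pM)
      = 0 :=
    Complex.circleIntegral_eq_zero_of_differentiable_on_off_countable zero_le_one countable_empty
      hFdiff.continuous.continuousOn (fun z _ => hFdiff.differentiableAt)
  have hCLM : (∮ z in C(0,1), (z • (1 : Mat m) - M)⁻¹ * exp pM)
      = (∮ z in C(0,1), (z • (1 : Mat m) - M)⁻¹) * exp pM := by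
    have := circleIntegral_CLM (mulRightCLM (exp pM))
      (f := fun z : ℂ => (z • (1 : Mat m) - M)⁻¹) (c := 0) (R := 1)
      (ContinuousOn.circleIntegrable zero_le_one (continuousOn_res M hM))
    exact this
  rw [hzero, add_zero, hCLM, res_int M hM, smul_mul_assoc, one_mul]


lemma spectrum_transpose (D : Mat m) (hD : ∀ z ∈ spectrum ℂ D, ‖z‖ < 1) :
    ∀ z ∈ spectrum ℂ Dᵀ, ‖z‖ < 1 := by
  intro z hz
  apply hD
  rw [spectrum.mem_iff] at hz ⊢
  intro hu
  apply hz
  rw [Algebra.algebraMap_eq_smul_one] at hu ⊢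
  rw [Matrix.isUnit_iff_isUnit_det] at hu ⊢
  have : (z • (1 : Mat m) - Dᵀ) = (z • (1 : Mat m) - D)ᵀ := by
    rw [transpose_sub, transpose_smul, transpose_one]
  rw [this, Matrix.det_transpose]
  exact hu

section Final

variable {n N : ℕ}

noncomputable def L₁ (A : Matrix (Fin n) (Fin N) ℂ) (a : Fin n) (b : Fin N) :
    Mat N →L[ℂ] ℂ :=
  LinearMap.toContinuousLinearMap
    { toFun := fun X => (A * X) a b
      map_add' := fun X Y => by simp [Matrix.mul_add]
      map_smul' := fun c X => by simp [Matrix.mul_smul] }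

noncomputable def L₂ (A : Matrix (Fin n) (Fin N) ℂ) (a : Fin n) (b : Fin N) :
    Mat n →L[ℂ] ℂ :=
  LinearMap.toContinuousLinearMap
    { toFun := fun X => (X * A) a b
      map_add' := fun X Y => by simp [Matrix.add_mul]
      map_smul' := fun c X => by simp [Matrix.smul_mul] }

theorem stmt16' (A : Matrix (Fin n) (Fin N) ℂ)
    (B : Mat N) (D : Mat n)
    (hB : ∀ z ∈ spectrum ℂ B, ‖z‖ < 1)
    (hD : ∀ z ∈ spectrum ℂ D, ‖z‖ < 1)
    (f : Fin n → ℂ) (g : Fin N → ℂ)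
    (h : A * B - Dᵀ * A = Matrix.vecMulVec f g)
    (K : ℕ) (t : Fin K → ℂ) :
    ∀ (a : Fin n) (b : Fin N),
      (2 * Real.pi * Complex.I)⁻¹ *
        (∮ z in C(0, 1),
          ((((z • (1 : Matrix (Fin n) (Fin n) ℂ) - Dᵀ)⁻¹ * Matrix.vecMulVec f g
            * (z • (1 : Matrix (Fin N) (Fin N) ℂ) - B)⁻¹) a b)
            * Complex.exp (∑ i : Fin K, t i * z ^ ((i : ℕ) + 1))))
      = (A * NormedSpace.exp (∑ i : Fin K, t i • B ^ ((i : ℕ) + 1))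
          - NormedSpace.exp (∑ i : Fin K, t i • (Dᵀ) ^ ((i : ℕ) + 1)) * A) a b := by
  intro a b
  have hDT := spectrum_transpose D hD
  set φ : ℂ → ℂ := fun z => Complex.exp (∑ i : Fin K, t i * z ^ ((i : ℕ) + 1)) with hφdef
  have hφ : Continuous φ := by
    apply Complex.continuous_exp.comp
    exact continuous_finset_sum _ fun i _ => continuous_const.mul (continuous_pow _)
  -- identity of the integrand on the sphere
  have hint : ∀ z ∈ sphere (0:ℂ) 1,
      (((z • (1 : Mat n) - Dᵀ)⁻¹ * Matrix.vecMulVec f g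
          * (z • (1 : Mat N) - B)⁻¹) a b) * φ z
        = L₁ A a b (φ z • ((z • (1 : Mat N) - B)⁻¹))
          - L₂ A a b (φ z • ((z • (1 : Mat n) - Dᵀ)⁻¹)) := by
    intro z hz
    have hfg : Matrix.vecMulVec f g
        = (z • (1 : Mat n) - Dᵀ) * A - A * (z • (1 : Mat N) - B) := by
      rw [← h, Matrix.sub_mul, Matrix.mul_sub, Matrix.smul_mul, Matrix.mul_smul,
        Matrix.one_mul, Matrix.mul_one]
      abel
    have hmain : (z • (1 : Mat n) - Dᵀ)⁻¹ * Matrix.vecMulVec f g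
        * (z • (1 : Mat N) - B)⁻¹
        = A * (z • (1 : Mat N) - B)⁻¹ - (z • (1 : Mat n) - Dᵀ)⁻¹ * A := by
      rw [hfg, Matrix.mul_sub, Matrix.sub_mul, ← Matrix.mul_assoc _ _ A,
        inv_mul_res (isUnit_res Dᵀ hDT hz), Matrix.one_mul, ← Matrix.mul_assoc _ A _,
        Matrix.mul_assoc _ _ ((z • (1 : Mat N) - B)⁻¹),
        mul_inv_res (isUnit_res B hB hz), Matrix.mul_one]
    rw [hmain]
    show ((A * (z • (1 : Mat N) - B)⁻¹ - (z • (1 : Mat n) - Dᵀ)⁻¹ * A) a b) * φ z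
      = (A * (φ z • (z • (1 : Mat N) - B)⁻¹)) a b - ((φ z • (z • (1 : Mat n) - Dᵀ)⁻¹) * A) a b
    rw [Matrix.mul_smul, Matrix.smul_mul, Matrix.sub_apply, Matrix.smul_apply,
      Matrix.smul_apply, smul_eq_mul, smul_eq_mul, sub_mul]
    ring
  have hg1 : CircleIntegrable (fun z : ℂ => φ z • ((z • (1 : Mat N) - B)⁻¹)) 0 1 :=
    ContinuousOn.circleIntegrable zero_le_one
      (hφ.continuousOn.smul (continuousOn_res B hB))
  have hg2 : CircleIntegrable (fun z : ℂ => φ z • ((z • (1 : Mat n) - Dᵀ)⁻¹)) 0 1 :=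
    ContinuousOn.circleIntegrable zero_le_one
      (hφ.continuousOn.smul (continuousOn_res Dᵀ hDT))
  have hL1int : CircleIntegrable (fun z : ℂ => L₁ A a b (φ z • ((z • (1 : Mat N) - B)⁻¹))) 0 1 := by
    refine ContinuousOn.circleIntegrable zero_le_one ?_
    exact (L₁ A a b).continuous.comp_continuousOn
      (hφ.continuousOn.smul (continuousOn_res B hB))
  have hL2int : CircleIntegrable (fun z : ℂ => L₂ A a b (φ z • ((z • (1 : Mat n) - Dᵀ)⁻¹))) 0 1 := by
    refine ContinuousOn.circleIntegrable zero_le_one ?_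
    exact (L₂ A a b).continuous.comp_continuousOn
      (hφ.continuousOn.smul (continuousOn_res Dᵀ hDT))
  rw [circleIntegral.integral_congr zero_le_one (fun z hz => hint z hz),
    circleIntegral.integral_sub hL1int hL2int]
  erw [circleIntegral_CLM (L₁ A a b) hg1, circleIntegral_CLM (L₂ A a b) hg2]
  rw [key B hB K t, key Dᵀ hDT K t]
  erw [(L₁ A a b).map_smul, (L₂ A a b).map_smul]
  show (2 * Real.pi * Complex.I : ℂ)⁻¹ *
      ((2 * Real.pi * Complex.I : ℂ) * ((A * exp (∑ i : Fin K, t i • B ^ ((i:ℕ)+1))) a b)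
        - (2 * Real.pi * Complex.I : ℂ) * ((exp (∑ i : Fin K, t i • (Dᵀ) ^ ((i:ℕ)+1)) * A) a b))
      = _
  rw [Matrix.sub_apply]
  field_simp [Complex.two_pi_I_ne_zero]
end Final
end Stmt16


/-- If all eigenvalues of `B` and `D` lie in the open unit disk and
`A·B − Dᵀ·A = f·gᵀ`, then (entrywise)
`(1/(2πi))·∮_{|z|=1} (zI−Dᵀ)⁻¹·f·gᵀ·(zI−B)⁻¹·exp(∑ tᵢ zⁱ) dz
  = A·exp(∑ tᵢ Bⁱ) − exp(∑ tᵢ (Dᵀ)ⁱ)·A`. -/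
theorem stmt16 (n N : ℕ) (A : Matrix (Fin n) (Fin N) ℂ)
    (B : Matrix (Fin N) (Fin N) ℂ) (D : Matrix (Fin n) (Fin n) ℂ)
    (hB : ∀ z ∈ spectrum ℂ B, ‖z‖ < 1)
    (hD : ∀ z ∈ spectrum ℂ D, ‖z‖ < 1)
    (f : Fin n → ℂ) (g : Fin N → ℂ)
    (h : A * B - Dᵀ * A = Matrix.vecMulVec f g)
    (K : ℕ) (t : Fin K → ℂ) :
    ∀ (a : Fin n) (b : Fin N),
      (2 * Real.pi * Complex.I)⁻¹ *
        (∮ z in C(0, 1),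
          ((((z • (1 : Matrix (Fin n) (Fin n) ℂ) - Dᵀ)⁻¹ * Matrix.vecMulVec f g
            * (z • (1 : Matrix (Fin N) (Fin N) ℂ) - B)⁻¹) a b)
            * Complex.exp (∑ i : Fin K, t i * z ^ ((i : ℕ) + 1))))
      = (A * NormedSpace.exp (∑ i : Fin K, t i • B ^ ((i : ℕ) + 1))
          - NormedSpace.exp (∑ i : Fin K, t i • (Dᵀ) ^ ((i : ℕ) + 1)) * A) a b := by
  exact Stmt16.stmt16' A B D hB hD f g h K t
end

section
/- Let A be an n×N complex matrix, B an N×N complex matrix, D an n×n complex matrix, f ∈ ℂⁿ, g ∈ ℂᴺ with A·B − Dᵀ·A = f·gᵀ, and let F be an l×n and C an l×N complex matrix with τ := det(F·A·Cᵀ) ≠ 0. Set M := Cᵀ·(F·A·Cᵀ)⁻¹·F (an N×n matrix) and, for z ∈ ℂ with Dᵀ − z·I_n invertible, define H(z) := τ·(1 + gᵀ·M·(Dᵀ − z·I_n)⁻¹·f) and G(z) := z + gᵀ·B·M·(Dᵀ − z·I_n)⁻¹·f. Then for all z₁, z₂ ∈ ℂ such that Dᵀ − z₁·I_n and Dᵀ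 − z₂·I_n are invertible, (z₁ − z₂) · det(F·(Dᵀ − z₁·I_n)⁻¹·(Dᵀ − z₂·I_n)⁻¹·A·(B − z₁·I_N)·(B − z₂·I_N)·Cᵀ) = G(z₁)·H(z₂) − G(z₂)·H(z₁). -/
open Matrix BigOperators

theorem pullGK {l n N : ℕ} (X : Matrix (Fin l) (Fin n) ℂ) (Y : Matrix (Fin N) (Fin l) ℂ)
    (f : Fin n → ℂ) (g : Fin N → ℂ) :
    X * Matrix.vecMulVec f g * Y = Matrix.vecMulVec (X *ᵥ f) (g ᵥ* Y) := by
  rw [Matrix.vecMulVec_eq (Fin 1), Matrix.vecMulVec_eq (Fin 1), Matrix.replicateCol_mulVec,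
    Matrix.replicateRow_vecMul, ← Matrix.mul_assoc]
  exact Matrix.mul_assoc _ _ _

theorem vecMul_smulGK {n m : ℕ} (v : Fin n → ℂ) (c : ℂ) (M : Matrix (Fin n) (Fin m) ℂ) :
    v ᵥ* (c • M) = c • (v ᵥ* M) := by
  ext j
  simp [Matrix.vecMul, dotProduct, Finset.mul_sum, Matrix.smul_apply, mul_left_comm]


/-- The matrix `M = Cᵀ·(F·A·Cᵀ)⁻¹·F` of the Gekhtman–Kasman construction. -/
noncomputable def GKM {l n N : ℕ} (A : Matrix (Fin n) (Fin N) ℂ)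
    (F : Matrix (Fin l) (Fin n) ℂ) (C : Matrix (Fin l) (Fin N) ℂ) :
    Matrix (Fin N) (Fin n) ℂ :=
  Cᵀ * (F * A * Cᵀ)⁻¹ * F

/-- `H(z) = τ·(1 + gᵀ·M·(Dᵀ − z·I_n)⁻¹·f)` where `τ = det(F·A·Cᵀ)`. -/
noncomputable def GKH {l n N : ℕ} (A : Matrix (Fin n) (Fin N) ℂ)
    (D : Matrix (Fin n) (Fin n) ℂ) (f : Fin n → ℂ) (g : Fin N → ℂ)
    (F : Matrix (Fin l) (Fin n) ℂ) (C : Matrix (Fin l) (Fin N) ℂ) (z : ℂ) : ℂ :=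
  (F * A * Cᵀ).det *
    (1 + g ⬝ᵥ (GKM A F C * (Dᵀ - z • (1 : Matrix (Fin n) (Fin n) ℂ))⁻¹) *ᵥ f)

/-- `G(z) = z + gᵀ·B·M·(Dᵀ − z·I_n)⁻¹·f`. -/
noncomputable def GKG {l n N : ℕ} (A : Matrix (Fin n) (Fin N) ℂ)
    (B : Matrix (Fin N) (Fin N) ℂ) (D : Matrix (Fin n) (Fin n) ℂ)
    (f : Fin n → ℂ) (g : Fin N → ℂ)
    (F : Matrix (Fin l) (Fin n) ℂ) (C : Matrix (Fin l) (Fin N) ℂ) (z : ℂ) : ℂ :=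
  z + g ⬝ᵥ (B * GKM A F C * (Dᵀ - z • (1 : Matrix (Fin n) (Fin n) ℂ))⁻¹) *ᵥ f

/-- If `A·B − Dᵀ·A = f·gᵀ` and `τ = det(F·A·Cᵀ) ≠ 0`, then for all
`z₁, z₂` with `Dᵀ − zᵢ·I_n` invertible,
`(z₁ − z₂)·det(F·(Dᵀ−z₁I)⁻¹·(Dᵀ−z₂I)⁻¹·A·(B−z₁I)·(B−z₂I)·Cᵀ)
  = G(z₁)·H(z₂) − G(z₂)·H(z₁)`. -/
theorem stmt18 (l n N : ℕ) (A : Matrix (Fin n) (Fin N) ℂ)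
    (B : Matrix (Fin N) (Fin N) ℂ) (D : Matrix (Fin n) (Fin n) ℂ)
    (f : Fin n → ℂ) (g : Fin N → ℂ)
    (hrank : A * B - Dᵀ * A = Matrix.vecMulVec f g)
    (F : Matrix (Fin l) (Fin n) ℂ) (C : Matrix (Fin l) (Fin N) ℂ)
    (hτ : (F * A * Cᵀ).det ≠ 0)
    (z₁ z₂ : ℂ)
    (h₁ : IsUnit (Dᵀ - z₁ • (1 : Matrix (Fin n) (Fin n) ℂ)))
    (h₂ : IsUnit (Dᵀ - z₂ • (1 : Matrix (Fin n) (Fin n) ℂ))) :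
    (z₁ - z₂) *
        (F * (Dᵀ - z₁ • (1 : Matrix (Fin n) (Fin n) ℂ))⁻¹
          * (Dᵀ - z₂ • (1 : Matrix (Fin n) (Fin n) ℂ))⁻¹ * A
          * (B - z₁ • (1 : Matrix (Fin N) (Fin N) ℂ))
          * (B - z₂ • (1 : Matrix (Fin N) (Fin N) ℂ)) * Cᵀ).det
      = GKG A B D f g F C z₁ * GKH A D f g F C z₂
        - GKG A B D f g F C z₂ * GKH A D f g F C z₁ := by
  set Δ₁ := Dᵀ - z₁ • (1 : Matrix (Fin n) (Fin n) ℂ) with hΔ₁def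
  set Δ₂ := Dᵀ - z₂ • (1 : Matrix (Fin n) (Fin n) ℂ) with hΔ₂def
  set R₁ := Δ₁⁻¹ with hR₁def
  set R₂ := Δ₂⁻¹ with hR₂def
  set T := F * A * Cᵀ with hTdef
  have hd₁ : IsUnit Δ₁.det := (Matrix.isUnit_iff_isUnit_det _).mp h₁
  have hd₂ : IsUnit Δ₂.det := (Matrix.isUnit_iff_isUnit_det _).mp h₂
  have hΔR₂ : Δ₂ * R₂ = 1 := Matrix.mul_nonsing_inv _ hd₂
  have hRΔ₁ : R₁ * Δ₁ = 1 := Matrix.nonsing_inv_mul _ hd₁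
  have hRΔ₂ : R₂ * Δ₂ = 1 := Matrix.nonsing_inv_mul _ hd₂
  have hTinv : T * T⁻¹ = 1 := Matrix.mul_nonsing_inv _ (isUnit_iff_ne_zero.mpr hτ)
  set fg := Matrix.vecMulVec f g with hfgdef
  -- A·(B − z·I) = Δ_z·A + f·gᵀ
  have hAz : ∀ z : ℂ, A * (B - z • (1 : Matrix (Fin N) (Fin N) ℂ))
      = (Dᵀ - z • (1 : Matrix (Fin n) (Fin n) ℂ)) * A + fg := by
    intro z
    have h1 : A * B = Dᵀ * A + fg := by rw [← hrank]; abel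
    rw [Matrix.mul_sub, Matrix.sub_mul, h1, Matrix.mul_smul, Matrix.smul_mul,
      Matrix.mul_one, Matrix.one_mul]
    abel
  -- commutation of (B − z₁ I) and (B − z₂ I)
  have hcommB : (B - z₁ • (1 : Matrix (Fin N) (Fin N) ℂ)) * (B - z₂ • 1)
      = (B - z₂ • 1) * (B - z₁ • 1) := by
    simp only [Matrix.mul_sub, Matrix.sub_mul, Matrix.mul_smul, Matrix.smul_mul,
      Matrix.mul_one, Matrix.one_mul, smul_sub, smul_smul, mul_comm z₂ z₁]
    abel
  -- generic "move the resolvent across" step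
  have e0 : ∀ (z : ℂ) (R : Matrix (Fin n) (Fin n) ℂ) (Y : Matrix (Fin N) (Fin l) ℂ),
      R * (Dᵀ - z • 1) = 1 →
      R * (A * ((B - z • 1) * Y)) = A * Y + R * (fg * Y) := by
    intro z R Y hR
    rw [← Matrix.mul_assoc A, hAz z, Matrix.add_mul, Matrix.mul_add,
      ← Matrix.mul_assoc R, ← Matrix.mul_assoc R, hR, Matrix.one_mul]
  set u₁ : Fin l → ℂ := (F * R₁) *ᵥ f with hu₁
  set u₂ : Fin l → ℂ := (F * (R₁ * R₂)) *ᵥ f with hu₂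
  set w : Fin l → ℂ := g ᵥ* Cᵀ with hw
  set v : Fin l → ℂ := g ᵥ* ((B - z₁ • 1) * Cᵀ) with hv
  have hX : F * R₁ * R₂ * A * (B - z₁ • (1 : Matrix (Fin N) (Fin N) ℂ))
        * (B - z₂ • (1 : Matrix (Fin N) (Fin N) ℂ)) * Cᵀ
      = T + Matrix.vecMulVec u₁ w + Matrix.vecMulVec u₂ v := by
    have e1 := e0 z₂ R₂ ((B - z₁ • 1) * Cᵀ) hRΔ₂
    have e2 := e0 z₁ R₁ Cᵀ hRΔ₁
    calc F * R₁ * R₂ * A * (B - z₁ • 1) * (B - z₂ • 1) * Cᵀ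
        = F * (R₁ * (R₂ * (A * ((B - z₂ • 1) * ((B - z₁ • 1) * Cᵀ))))) := by
          simp only [Matrix.mul_assoc]
          rw [← Matrix.mul_assoc (B - z₁ • 1), hcommB, Matrix.mul_assoc]
      _ = F * (R₁ * (A * ((B - z₁ • 1) * Cᵀ)) + R₁ * (R₂ * (fg * ((B - z₁ • 1) * Cᵀ)))) := by
          rw [e1, Matrix.mul_add]
      _ = F * (A * Cᵀ) + F * R₁ * fg * Cᵀ + F * (R₁ * R₂) * fg * ((B - z₁ • 1) * Cᵀ) := by
          rw [e2]
          simp only [Matrix.mul_add, Matrix.mul_assoc]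
          try abel
      _ = T + Matrix.vecMulVec u₁ w + Matrix.vecMulVec u₂ v := by
          rw [pullGK, pullGK, hTdef, Matrix.mul_assoc F A Cᵀ]
  set P : Matrix (Fin l) (Fin 2) ℂ := Matrix.of fun i j => ![u₁, u₂] j i with hP
  set Q : Matrix (Fin 2) (Fin l) ℂ := Matrix.of ![w, v] with hQ
  have hPQ : P * Q = Matrix.vecMulVec u₁ w + Matrix.vecMulVec u₂ v := by
    ext i k
    simp [hP, hQ, Matrix.mul_apply, Fin.sum_univ_two, Matrix.vecMulVec_apply]
  set S := Q * (T⁻¹ * P) with hSdef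
  have hdetX : (F * R₁ * R₂ * A * (B - z₁ • (1 : Matrix (Fin N) (Fin N) ℂ))
        * (B - z₂ • (1 : Matrix (Fin N) (Fin N) ℂ)) * Cᵀ).det
      = T.det * (1 + S).det := by
    have hfac : F * R₁ * R₂ * A * (B - z₁ • (1 : Matrix (Fin N) (Fin N) ℂ))
        * (B - z₂ • (1 : Matrix (Fin N) (Fin N) ℂ)) * Cᵀ
        = T * (1 + T⁻¹ * (P * Q)) := by
      rw [Matrix.mul_add, Matrix.mul_one, ← Matrix.mul_assoc, hTinv, Matrix.one_mul,
        hPQ, hX, add_assoc]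
    rw [hfac, Matrix.det_mul]
    congr 1
    rw [← Matrix.mul_assoc, Matrix.det_one_add_mul_comm, hSdef]
  -- the 2×2 determinant
  have hdet2 : (1 + S).det = (1 + S 0 0) * (1 + S 1 1) - S 0 1 * S 1 0 := by
    rw [Matrix.det_fin_two]
    simp [Matrix.add_apply, Matrix.one_apply]
  -- entries of S
  have hSent : ∀ i j, S i j = ![w, v] i ⬝ᵥ T⁻¹ *ᵥ ![u₁, u₂] j := fun i j => rfl
  have hS00 : S 0 0 = w ⬝ᵥ T⁻¹ *ᵥ u₁ := by rw [hSent]; rfl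
  have hS01 : S 0 1 = w ⬝ᵥ T⁻¹ *ᵥ u₂ := by rw [hSent]; rfl
  have hS10 : S 1 0 = v ⬝ᵥ T⁻¹ *ᵥ u₁ := by rw [hSent]; rfl
  have hS11 : S 1 1 = v ⬝ᵥ T⁻¹ *ᵥ u₂ := by rw [hSent]; rfl
  have hMm : GKM A F C = Cᵀ * T⁻¹ * F := by rw [GKM, hTdef]
  -- scalar identifications
  have hm1 : w ⬝ᵥ T⁻¹ *ᵥ u₁ = g ⬝ᵥ (GKM A F C * R₁) *ᵥ f := by
    rw [hMm, hw, hu₁]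
    simp only [Matrix.dotProduct_mulVec, Matrix.vecMul_vecMul, Matrix.mul_assoc]
  have hm12 : w ⬝ᵥ T⁻¹ *ᵥ u₂ = g ⬝ᵥ (GKM A F C * (R₁ * R₂)) *ᵥ f := by
    rw [hMm, hw, hu₂]
    simp only [Matrix.dotProduct_mulVec, Matrix.vecMul_vecMul, Matrix.mul_assoc]
  have hb1 : v ⬝ᵥ T⁻¹ *ᵥ u₁
      = g ⬝ᵥ (B * GKM A F C * R₁) *ᵥ f - z₁ * (g ⬝ᵥ (GKM A F C * R₁) *ᵥ f) := by
    rw [hMm, hv, hu₁]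
    simp only [Matrix.dotProduct_mulVec, Matrix.vecMul_vecMul, Matrix.mul_assoc,
      Matrix.sub_mul, Matrix.smul_mul, Matrix.one_mul, Matrix.vecMul_sub,
      Matrix.sub_vecMul, Matrix.smul_vecMul, vecMul_smulGK,
      sub_dotProduct, smul_dotProduct, smul_eq_mul]
  have hb12 : v ⬝ᵥ T⁻¹ *ᵥ u₂
      = g ⬝ᵥ (B * GKM A F C * (R₁ * R₂)) *ᵥ f
        - z₁ * (g ⬝ᵥ (GKM A F C * (R₁ * R₂)) *ᵥ f) := by
    rw [hMm, hv, hu₂]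
    simp only [Matrix.dotProduct_mulVec, Matrix.vecMul_vecMul, Matrix.mul_assoc,
      Matrix.sub_mul, Matrix.smul_mul, Matrix.one_mul, Matrix.vecMul_sub,
      Matrix.sub_vecMul, Matrix.smul_vecMul, vecMul_smulGK,
      sub_dotProduct, smul_dotProduct, smul_eq_mul]
  -- resolvent identity
  have hres : R₁ - R₂ = (z₁ - z₂) • (R₁ * R₂) := by
    have hΔsub : Δ₂ - Δ₁ = (z₁ - z₂) • (1 : Matrix (Fin n) (Fin n) ℂ) := by
      rw [hΔ₂def, hΔ₁def, sub_smul]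
      abel
    calc R₁ - R₂ = R₁ * (Δ₂ * R₂) - R₁ * (Δ₁ * R₂) := by
          rw [hΔR₂, Matrix.mul_one, ← Matrix.mul_assoc R₁ Δ₁ R₂, hRΔ₁, Matrix.one_mul]
      _ = R₁ * ((Δ₂ - Δ₁) * R₂) := by
          rw [Matrix.sub_mul Δ₂ Δ₁ R₂, Matrix.mul_sub]
      _ = (z₁ - z₂) • (R₁ * R₂) := by
          rw [hΔsub, Matrix.smul_mul, Matrix.one_mul, Matrix.mul_smul]
  have hsc : ∀ Z : Matrix (Fin N) (Fin n) ℂ,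
      g ⬝ᵥ (Z * R₁) *ᵥ f - g ⬝ᵥ (Z * R₂) *ᵥ f
        = (z₁ - z₂) * (g ⬝ᵥ (Z * (R₁ * R₂)) *ᵥ f) := by
    intro Z
    have hZ : Z * R₁ - Z * R₂ = (z₁ - z₂) • (Z * (R₁ * R₂)) := by
      rw [← Matrix.mul_sub, hres, Matrix.mul_smul]
    rw [← dotProduct_sub, ← Matrix.sub_mulVec, hZ, Matrix.smul_mulVec,
      dotProduct_smul, smul_eq_mul]
  have hm := hsc (GKM A F C)
  have hb := hsc (B * GKM A F C)
  rw [hdetX, hdet2, hS00, hS01, hS10, hS11, hm1, hm12, hb1, hb12]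
  simp only [GKG, GKH, ← hΔ₁def, ← hΔ₂def, ← hR₁def, ← hR₂def, ← hTdef]
  linear_combination (T.det * (z₁ + g ⬝ᵥ (B * GKM A F C * R₁) *ᵥ f)) * hm
    - (T.det * (1 + g ⬝ᵥ (GKM A F C * R₁) *ᵥ f)) * hb
end

section
/- Let A be an n×N complex matrix, B an N×N complex matrix, D an n×n complex matrix, f ∈ ℂⁿ, g ∈ ℂᴺ with A·B − Dᵀ·A = f·gᵀ, and let F be an l×n and C an l×N complex matrix with det(F·A·Cᵀ) ≠ 0. For z ∈ ℂ with Dᵀ − z·I_n invertible and any w ∈ ℂ with Dᵀ − w·I_n invertible, define ξ(z,w) := (z − w) · det(F·(Dᵀ − z·I_n)⁻¹·(Dᵀ − w·I_n)⁻¹·A·(B − z·I_N)·(B − w·I_N)·Cᵀ). Then for all z₁, z₂, z₃, z₄ ∈ ℂ such that Dᵀ − z_i·I_n is invertible for i = 1,2,3,4, the Plücker relation ξ(z₁,z₂)·ξ(z₃,z₄) − ξ(z₁,z₃)·ξ(z₂,z₄) + ξ(z₁,z₄)·ξ(z₂,z₃) = 0 holds. -/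
open Matrix BigOperators

/-- `ξ(z,w) = (z − w)·det(F·(Dᵀ − z·I)⁻¹·(Dᵀ − w·I)⁻¹·A·(B − z·I)·(B − w·I)·Cᵀ)`. -/
noncomputable def xiGK {l n N : ℕ} (A : Matrix (Fin n) (Fin N) ℂ)
    (B : Matrix (Fin N) (Fin N) ℂ) (D : Matrix (Fin n) (Fin n) ℂ)
    (F : Matrix (Fin l) (Fin n) ℂ) (C : Matrix (Fin l) (Fin N) ℂ) (z w : ℂ) : ℂ :=
  (z - w) *
    (F * (Dᵀ - z • (1 : Matrix (Fin n) (Fin n) ℂ))⁻¹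
      * (Dᵀ - w • (1 : Matrix (Fin n) (Fin n) ℂ))⁻¹ * A
      * (B - z • (1 : Matrix (Fin N) (Fin N) ℂ))
      * (B - w • (1 : Matrix (Fin N) (Fin N) ℂ)) * Cᵀ).det


lemma det_add_two_vecMulVec {l : ℕ} (T : Matrix (Fin l) (Fin l) ℂ) (hT : IsUnit T.det)
    (x₁ x₂ y₁ y₂ : Fin l → ℂ) :
    (T + vecMulVec x₁ y₁ + vecMulVec x₂ y₂).det
      = T.det * ((1 + y₁ ⬝ᵥ T⁻¹ *ᵥ x₁) * (1 + y₂ ⬝ᵥ T⁻¹ *ᵥ x₂)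
        - (y₁ ⬝ᵥ T⁻¹ *ᵥ x₂) * (y₂ ⬝ᵥ T⁻¹ *ᵥ x₁)) := by
  set P : Matrix (Fin l) (Fin 2) ℂ := Matrix.of fun i j => ![x₁, x₂] j i with hP
  set Q : Matrix (Fin 2) (Fin l) ℂ := Matrix.of fun j i => ![y₁, y₂] j i with hQ
  have hPQ : vecMulVec x₁ y₁ + vecMulVec x₂ y₂ = P * Q := by
    ext i j
    simp [hP, hQ, mul_apply, Fin.sum_univ_two, vecMulVec_apply]
  have h1 : T + vecMulVec x₁ y₁ + vecMulVec x₂ y₂ = T * (1 + T⁻¹ * P * Q) := by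
    rw [Matrix.mul_add, Matrix.mul_one, add_assoc, hPQ, ← Matrix.mul_assoc,
      ← Matrix.mul_assoc, Matrix.mul_nonsing_inv _ hT, Matrix.one_mul]
  rw [h1, det_mul, det_one_add_mul_comm (T⁻¹ * P) Q]
  congr 1
  rw [det_fin_two]
  have he : ∀ (a b : Fin 2), (Q * (T⁻¹ * P)) a b
      = ![y₁, y₂] a ⬝ᵥ T⁻¹ *ᵥ ![x₁, x₂] b := by
    intro a b
    simp [hP, hQ, mul_apply, mulVec, dotProduct, Finset.mul_sum, mul_comm, mul_left_comm]
  simp only [Matrix.add_apply, Matrix.one_apply, he]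
  norm_num


lemma sandwich_vecMulVec {l n N m : ℕ} (P : Matrix (Fin l) (Fin n) ℂ)
    (Q : Matrix (Fin N) (Fin m) ℂ) (f : Fin n → ℂ) (g : Fin N → ℂ) :
    P * vecMulVec f g * Q = vecMulVec (P *ᵥ f) (g ᵥ* Q) := by
  rw [vecMulVec_eq Unit, vecMulVec_eq Unit, replicateCol_mulVec, replicateRow_vecMul,
    Matrix.mul_assoc, Matrix.mul_assoc, Matrix.mul_assoc]


/-- If `A·B − Dᵀ·A = f·gᵀ` and `det(F·A·Cᵀ) ≠ 0`, then for all
`z₁, z₂, z₃, z₄` with each `Dᵀ − zᵢ·I_n` invertible, the Plücker relation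
`ξ(z₁,z₂)·ξ(z₃,z₄) − ξ(z₁,z₃)·ξ(z₂,z₄) + ξ(z₁,z₄)·ξ(z₂,z₃) = 0` holds. -/
theorem stmt19 (l n N : ℕ) (A : Matrix (Fin n) (Fin N) ℂ)
    (B : Matrix (Fin N) (Fin N) ℂ) (D : Matrix (Fin n) (Fin n) ℂ)
    (f : Fin n → ℂ) (g : Fin N → ℂ)
    (hrank : A * B - Dᵀ * A = Matrix.vecMulVec f g)
    (F : Matrix (Fin l) (Fin n) ℂ) (C : Matrix (Fin l) (Fin N) ℂ)
    (hτ : (F * A * Cᵀ).det ≠ 0)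
    (z₁ z₂ z₃ z₄ : ℂ)
    (h₁ : IsUnit (Dᵀ - z₁ • (1 : Matrix (Fin n) (Fin n) ℂ)))
    (h₂ : IsUnit (Dᵀ - z₂ • (1 : Matrix (Fin n) (Fin n) ℂ)))
    (h₃ : IsUnit (Dᵀ - z₃ • (1 : Matrix (Fin n) (Fin n) ℂ)))
    (h₄ : IsUnit (Dᵀ - z₄ • (1 : Matrix (Fin n) (Fin n) ℂ))) :
    xiGK A B D F C z₁ z₂ * xiGK A B D F C z₃ z₄
      - xiGK A B D F C z₁ z₃ * xiGK A B D F C z₂ z₄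
      + xiGK A B D F C z₁ z₄ * xiGK A B D F C z₂ z₃ = 0 := by
  set T : Matrix (Fin l) (Fin l) ℂ := F * A * Cᵀ with hTdef
  have hT : IsUnit T.det := isUnit_iff_ne_zero.mpr hτ
  set φ : ℂ → ℂ := fun t =>
    (g ᵥ* Cᵀ) ⬝ᵥ T⁻¹ *ᵥ ((F * (Dᵀ - t • (1 : Matrix (Fin n) (Fin n) ℂ))⁻¹) *ᵥ f) with hφ
  set ψ : ℂ → ℂ := fun t =>
    (g ᵥ* (B * Cᵀ)) ⬝ᵥ T⁻¹ *ᵥ ((F * (Dᵀ - t • (1 : Matrix (Fin n) (Fin n) ℂ))⁻¹) *ᵥ f) with hψ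
  have key : ∀ z w : ℂ, IsUnit (Dᵀ - z • (1 : Matrix (Fin n) (Fin n) ℂ)) →
      IsUnit (Dᵀ - w • (1 : Matrix (Fin n) (Fin n) ℂ)) →
      xiGK A B D F C z w
        = T.det * ((z + ψ z) * (1 + φ w) - (w + ψ w) * (1 + φ z)) := by
    intro z w hz hw
    have hdz := (Matrix.isUnit_iff_isUnit_det _).mp hz
    have hdw := (Matrix.isUnit_iff_isUnit_det _).mp hw
    set Mz := Dᵀ - z • (1 : Matrix (Fin n) (Fin n) ℂ) with hMz
    set Mw := Dᵀ - w • (1 : Matrix (Fin n) (Fin n) ℂ) with hMw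
    have hcomm : Mz * Mw = Mw * Mz := by
      have h1 : Commute Dᵀ Mw :=
        (Commute.refl Dᵀ).sub_right ((Commute.one_right Dᵀ).smul_right w)
      have h2 : Commute (z • (1 : Matrix (Fin n) (Fin n) ℂ)) Mw :=
        ((Commute.one_left Dᵀ).smul_left z).sub_right
          (((Commute.refl (1 : Matrix (Fin n) (Fin n) ℂ)).smul_left z).smul_right w)
      exact (h1.sub_left h2).eq
    have hinvcomm : Mz⁻¹ * Mw⁻¹ = Mw⁻¹ * Mz⁻¹ := by
      rw [← Matrix.mul_inv_rev, ← Matrix.mul_inv_rev, hcomm]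
    have hAB : ∀ t : ℂ, A * (B - t • (1 : Matrix (Fin N) (Fin N) ℂ))
        = (Dᵀ - t • (1 : Matrix (Fin n) (Fin n) ℂ)) * A + vecMulVec f g := by
      intro t
      have h' : A * B = Dᵀ * A + vecMulVec f g := by
        rw [← hrank]; abel
      rw [Matrix.mul_sub, Matrix.sub_mul, Matrix.mul_smul, Matrix.smul_mul,
        Matrix.mul_one, Matrix.one_mul, h']
      abel
    have hz1 : Mz⁻¹ * (A * (B - z • (1 : Matrix (Fin N) (Fin N) ℂ)))
        = A + Mz⁻¹ * vecMulVec f g := by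
      rw [hAB z, ← hMz, Matrix.mul_add, ← Matrix.mul_assoc,
        Matrix.nonsing_inv_mul _ hdz, Matrix.one_mul]
    have hw1 : Mw⁻¹ * (A * (B - w • (1 : Matrix (Fin N) (Fin N) ℂ)))
        = A + Mw⁻¹ * vecMulVec f g := by
      rw [hAB w, ← hMw, Matrix.mul_add, ← Matrix.mul_assoc,
        Matrix.nonsing_inv_mul _ hdw, Matrix.one_mul]
    have e1 : Mz⁻¹ * Mw⁻¹ * A * (B - z • (1 : Matrix (Fin N) (Fin N) ℂ))
          * (B - w • (1 : Matrix (Fin N) (Fin N) ℂ))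
        = A + Mw⁻¹ * vecMulVec f g
          + (Mz⁻¹ * Mw⁻¹) * (vecMulVec f g * (B - w • (1 : Matrix (Fin N) (Fin N) ℂ))) := by
      calc Mz⁻¹ * Mw⁻¹ * A * (B - z • (1 : Matrix (Fin N) (Fin N) ℂ))
            * (B - w • (1 : Matrix (Fin N) (Fin N) ℂ))
          = Mw⁻¹ * ((Mz⁻¹ * (A * (B - z • (1 : Matrix (Fin N) (Fin N) ℂ))))
            * (B - w • (1 : Matrix (Fin N) (Fin N) ℂ))) := by
            rw [hinvcomm]; simp only [Matrix.mul_assoc]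
        _ = Mw⁻¹ * ((A + Mz⁻¹ * vecMulVec f g)
            * (B - w • (1 : Matrix (Fin N) (Fin N) ℂ))) := by rw [hz1]
        _ = Mw⁻¹ * (A * (B - w • (1 : Matrix (Fin N) (Fin N) ℂ)))
            + (Mw⁻¹ * Mz⁻¹) * (vecMulVec f g * (B - w • (1 : Matrix (Fin N) (Fin N) ℂ))) := by
            rw [Matrix.add_mul, Matrix.mul_add]; simp only [Matrix.mul_assoc]
        _ = A + Mw⁻¹ * vecMulVec f g
            + (Mz⁻¹ * Mw⁻¹) * (vecMulVec f g * (B - w • (1 : Matrix (Fin N) (Fin N) ℂ))) := by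
            rw [hw1, hinvcomm]
    have s1 : F * (Mw⁻¹ * vecMulVec f g) * Cᵀ
        = vecMulVec ((F * Mw⁻¹) *ᵥ f) (g ᵥ* Cᵀ) := by
      rw [← Matrix.mul_assoc, sandwich_vecMulVec]
    have s2 : F * ((Mz⁻¹ * Mw⁻¹) * (vecMulVec f g
          * (B - w • (1 : Matrix (Fin N) (Fin N) ℂ)))) * Cᵀ
        = vecMulVec ((F * (Mz⁻¹ * Mw⁻¹)) *ᵥ f)
            (g ᵥ* ((B - w • (1 : Matrix (Fin N) (Fin N) ℂ)) * Cᵀ)) := by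
      rw [← sandwich_vecMulVec (F * (Mz⁻¹ * Mw⁻¹))
        ((B - w • (1 : Matrix (Fin N) (Fin N) ℂ)) * Cᵀ) f g]
      simp only [Matrix.mul_assoc]
    have hM : F * Mz⁻¹ * Mw⁻¹ * A * (B - z • (1 : Matrix (Fin N) (Fin N) ℂ))
          * (B - w • (1 : Matrix (Fin N) (Fin N) ℂ)) * Cᵀ
        = T + vecMulVec ((F * Mw⁻¹) *ᵥ f) (g ᵥ* Cᵀ)
          + vecMulVec ((F * (Mz⁻¹ * Mw⁻¹)) *ᵥ f)
              (g ᵥ* ((B - w • (1 : Matrix (Fin N) (Fin N) ℂ)) * Cᵀ)) := by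
      calc F * Mz⁻¹ * Mw⁻¹ * A * (B - z • (1 : Matrix (Fin N) (Fin N) ℂ))
            * (B - w • (1 : Matrix (Fin N) (Fin N) ℂ)) * Cᵀ
          = F * (Mz⁻¹ * Mw⁻¹ * A * (B - z • (1 : Matrix (Fin N) (Fin N) ℂ))
            * (B - w • (1 : Matrix (Fin N) (Fin N) ℂ))) * Cᵀ := by
            simp only [Matrix.mul_assoc]
        _ = F * (A + Mw⁻¹ * vecMulVec f g
            + (Mz⁻¹ * Mw⁻¹) * (vecMulVec f g
              * (B - w • (1 : Matrix (Fin N) (Fin N) ℂ)))) * Cᵀ := by rw [e1]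
        _ = T + vecMulVec ((F * Mw⁻¹) *ᵥ f) (g ᵥ* Cᵀ)
            + vecMulVec ((F * (Mz⁻¹ * Mw⁻¹)) *ᵥ f)
                (g ᵥ* ((B - w • (1 : Matrix (Fin N) (Fin N) ℂ)) * Cᵀ)) := by
            rw [Matrix.mul_add, Matrix.mul_add, Matrix.add_mul, Matrix.add_mul, s1, s2, hTdef]
    have hres : (z - w) • (Mz⁻¹ * Mw⁻¹) = Mz⁻¹ - Mw⁻¹ := by
      have h1 : Mw - Mz = (z - w) • (1 : Matrix (Fin n) (Fin n) ℂ) := by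
        rw [hMz, hMw, sub_sub_sub_cancel_left, ← sub_smul]
      have h2 : Mz⁻¹ * ((Mw - Mz) * Mw⁻¹) = (z - w) • (Mz⁻¹ * Mw⁻¹) := by
        rw [h1, Matrix.smul_mul, Matrix.one_mul, Matrix.mul_smul]
      rw [← h2, Matrix.sub_mul, Matrix.mul_nonsing_inv _ hdw, Matrix.mul_sub,
        Matrix.mul_one, ← Matrix.mul_assoc, Matrix.nonsing_inv_mul _ hdz, Matrix.one_mul]
    have hscal : ∀ y : Fin l → ℂ,
        (z - w) * (y ⬝ᵥ T⁻¹ *ᵥ ((F * (Mz⁻¹ * Mw⁻¹)) *ᵥ f))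
          = y ⬝ᵥ T⁻¹ *ᵥ ((F * Mz⁻¹) *ᵥ f) - y ⬝ᵥ T⁻¹ *ᵥ ((F * Mw⁻¹) *ᵥ f) := by
      intro y
      have h2 : (z - w) • ((F * (Mz⁻¹ * Mw⁻¹)) *ᵥ f)
          = (F * Mz⁻¹) *ᵥ f - (F * Mw⁻¹) *ᵥ f := by
        rw [← Matrix.smul_mulVec, ← Matrix.mul_smul, hres, Matrix.mul_sub,
          Matrix.sub_mulVec]
      have h3 := congrArg (fun v => y ⬝ᵥ T⁻¹ *ᵥ v) h2
      simpa only [Matrix.mulVec_smul, Matrix.mulVec_sub, dotProduct_smul, dotProduct_sub,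
        smul_eq_mul] using h3
    have hy2 : g ᵥ* ((B - w • (1 : Matrix (Fin N) (Fin N) ℂ)) * Cᵀ)
        = g ᵥ* (B * Cᵀ) - w • (g ᵥ* Cᵀ) := by
      rw [Matrix.sub_mul, Matrix.smul_mul, Matrix.one_mul, Matrix.vecMul_sub]
      congr 1
      ext j
      simp [Matrix.vecMul, dotProduct, Finset.mul_sum, mul_comm, mul_left_comm]
    have hc := hscal (g ᵥ* Cᵀ)
    have he := hscal (g ᵥ* (B * Cᵀ))
    rw [xiGK, ← hMz, ← hMw, hM, det_add_two_vecMulVec T hT, hy2]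
    simp only [hφ, hψ, sub_dotProduct, smul_dotProduct, smul_eq_mul]
    linear_combination T.det * (1 + (g ᵥ* Cᵀ) ⬝ᵥ T⁻¹ *ᵥ ((F * Mw⁻¹) *ᵥ f)) * he
      - T.det * (w + (g ᵥ* (B * Cᵀ)) ⬝ᵥ T⁻¹ *ᵥ ((F * Mw⁻¹) *ᵥ f)) * hc
  rw [key z₁ z₂ h₁ h₂, key z₃ z₄ h₃ h₄, key z₁ z₃ h₁ h₃, key z₂ z₄ h₂ h₄,
    key z₁ z₄ h₁ h₄, key z₂ z₃ h₂ h₃]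
  ring
end
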